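/- arXiv:0809.0289 — 7 statements merged into one kernel-verified Lean document; each statement's English description precedes it below -/
import Mathlib

section
/- Every finite-dimensional right S_n-module is isomorphic to a direct sum of uniserial modules. -/
noncomputable section

def tF (k : Type) [Field k] : FreeAlgebra k (Fin 2) := FreeAlgebra.ι k 0

def gF (k : Type) [Field k] : FreeAlgebra k (Fin 2) := FreeAlgebra.ι k 1

inductive SRel (k : Type) [Field k] (n : ℕ) :
    FreeAlgebra k (Fin 2) → FreeAlgebra k (Fin 2) → Prop
  | tpow : SRel k n (tF k ^ n) 0
  | gsq  : SRel k n (gF k * gF k) 1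
  | anti : SRel k n (gF k * tF k + tF k * gF k) 0

/-- The algebra `S_n = k[T]/(T^n) ⋊ C₂`. -/
abbrev Sn (k : Type) [Field k] (n : ℕ) := RingQuot (SRel k n)

/-- A module is uniserial if its submodules are totally ordered by inclusion. -/
def IsUniserialMod (R M : Type) [Ring R] [AddCommGroup M] [Module R M] : Prop :=
  ∀ W₁ W₂ : Submodule R M, W₁ ≤ W₂ ∨ W₂ ≤ W₁


section Cyclic


variable {k V : Type} [Field k] [AddCommGroup V] [Module k V]

/-- The `f`-cyclic subspace generated by `m`. -/
def Cyc (f : Module.End k V) (m : V) : Submodule k V :=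
  Submodule.span k (Set.range fun j : ℕ => (f ^ j) m)

variable (f : Module.End k V)

lemma pow_apply_pow (a b : ℕ) (m : V) : (f ^ a) ((f ^ b) m) = (f ^ (b + a)) m := by
  rw [← Module.End.mul_apply, ← pow_add, add_comm]

lemma pow_apply_eq {a b : ℕ} (h : a = b) (m : V) : (f ^ a) m = (f ^ b) m := by rw [h]

lemma pow_mem_cyc (m : V) (j : ℕ) : (f ^ j) m ∈ Cyc f m :=
  Submodule.subset_span ⟨j, rfl⟩

lemma mem_cyc_self (m : V) : m ∈ Cyc f m := by
  simpa using pow_mem_cyc f m 0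

lemma cyc_f_stable {m : V} {v : V} (hv : v ∈ Cyc f m) : f v ∈ Cyc f m := by
  induction hv using Submodule.span_induction with
  | mem x hx => obtain ⟨j, rfl⟩ := hx
                simpa [pow_apply_pow, ← Module.End.mul_apply, ← pow_succ'] using
                  pow_mem_cyc f m (j+1)
  | zero => simp
  | add x y _ _ hx hy => simpa [map_add] using Submodule.add_mem _ hx hy
  | smul a x _ hx => simpa [map_smul] using Submodule.smul_mem _ a hx

lemma pow_mem_of_mem {W : Submodule k V} (hW : ∀ v ∈ W, f v ∈ W) (s : ℕ) {v : V}
    (hv : v ∈ W) : (f ^ s) v ∈ W := by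
  induction s with
  | zero => simpa
  | succ t ih => rw [pow_succ'] ; exact hW _ ih

lemma cyc_pow_le (m : V) (j : ℕ) : Cyc f ((f ^ j) m) ≤ Cyc f m := by
  rw [Cyc, Submodule.span_le]
  rintro x ⟨l, rfl⟩
  simpa [pow_apply_pow] using pow_mem_cyc f m (j + l)

lemma cyc_antitone (m : V) {i j : ℕ} (hij : i ≤ j) :
    Cyc f ((f ^ j) m) ≤ Cyc f ((f ^ i) m) := by
  have h1 : i + (j - i) = j := by omega
  have : (f ^ j) m = (f ^ (j - i)) ((f ^ i) m) := by
    rw [pow_apply_pow, h1]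
  rw [this]
  exact cyc_pow_le f _ _

lemma cyc_zero : Cyc f (0 : V) = ⊥ := by
  rw [Cyc, Submodule.span_eq_bot]
  rintro x ⟨l, rfl⟩; simp

lemma cyc_split (m : V) : Cyc f m = (k ∙ m) ⊔ Cyc f (f m) := by
  have hr : (Set.range fun j : ℕ => (f ^ j) m)
      = {m} ∪ Set.range fun j : ℕ => (f ^ j) (f m) := by
    ext y
    simp only [Set.mem_union, Set.mem_range, Set.mem_singleton_iff]
    constructor
    · rintro ⟨j, rfl⟩
      cases j with
      | zero => left; simp
      | succ i => right; exact ⟨i, by rw [← Module.End.mul_apply, ← pow_succ]⟩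
    · rintro (h | ⟨i, rfl⟩)
      · exact ⟨0, by simpa using h.symm⟩
      · exact ⟨i + 1, by rw [← Module.End.mul_apply, ← pow_succ]⟩
  rw [Cyc, hr, Submodule.span_union]
  rfl

/-- Key absorption lemma. -/
lemma cyc_le_of_mem {N : ℕ} (hfN : f ^ N = 0) {m x y : V} {W : Submodule k V}
    (hW : ∀ v ∈ W, f v ∈ W) (hx : x ∈ W) {j : ℕ} {c : k} (hc : c ≠ 0)
    (hy : y ∈ Cyc f ((f ^ (j + 1)) m)) (hxe : x = c • (f ^ j) m + y) :
    Cyc f ((f ^ j) m) ≤ W := by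
  have key : ∀ t s : ℕ, N - s ≤ t → (f ^ (j + s)) m ∈ W := by
    intro t
    induction t with
    | zero =>
      intro s hs
      have h0 : f ^ (j + s) = (0 : Module.End k V) :=
        pow_eq_zero_of_le (show N ≤ j + s by omega) hfN
      rw [h0]; exact W.zero_mem
    | succ t ih =>
      intro s hs
      by_cases hNs : N ≤ s
      · have h0 : f ^ (j + s) = (0 : Module.End k V) :=
          pow_eq_zero_of_le (show N ≤ j + s by omega) hfN
        rw [h0]; exact W.zero_mem
      · have hnext : ∀ s', s + 1 ≤ s' → (f ^ (j + s')) m ∈ W := by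
          intro s' hs'
          refine ih s' (by omega)
        have hz : (f ^ s) x ∈ W := pow_mem_of_mem f hW s hx
        have hfy : (f ^ s) y ∈ Cyc f ((f ^ (j + s + 1)) m) := by
          have h1 : Submodule.map (f ^ s) (Cyc f ((f ^ (j + 1)) m))
              ≤ Cyc f ((f ^ (j + s + 1)) m) := by
            rw [Cyc, Submodule.map_span, Submodule.span_le]
            rintro w ⟨w', ⟨l, rfl⟩, rfl⟩
            have h3 : (f ^ s) ((f ^ l) ((f ^ (j+1)) m)) = (f ^ l) ((f ^ (j + s + 1)) m) := by
              rw [pow_apply_pow, pow_apply_pow, pow_apply_pow]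
              exact pow_apply_eq f (by omega) m
            simpa only [h3, SetLike.mem_coe] using pow_mem_cyc f ((f ^ (j + s + 1)) m) l
          exact h1 ⟨y, hy, rfl⟩
        have hfyW : (f ^ s) y ∈ W := by
          have h2 : Cyc f ((f ^ (j + s + 1)) m) ≤ W := by
            rw [Cyc, Submodule.span_le]
            rintro w ⟨l, rfl⟩
            have h4 : j + s + 1 + l = j + (s + 1 + l) := by omega
            have h3 : (f ^ l) ((f ^ (j + s + 1)) m) = (f ^ (j + (s + 1 + l))) m := by
              rw [pow_apply_pow, h4]
            simpa only [h3, SetLike.mem_coe] using hnext _ (by omega)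
          exact h2 hfy
        have hsum : (f ^ s) x = c • (f ^ (j + s)) m + (f ^ s) y := by
          rw [hxe, map_add, map_smul, pow_apply_pow]
        have hmem : c • (f ^ (j + s)) m ∈ W := by
          have h5 := W.sub_mem hz hfyW
          rw [hsum] at h5
          simpa using h5
        have h6 := W.smul_mem c⁻¹ hmem
        rwa [smul_smul, inv_mul_cancel₀ hc, one_smul] at h6
  rw [Cyc, Submodule.span_le]
  rintro w ⟨l, rfl⟩
  have h3 : (f ^ l) ((f ^ j) m) = (f ^ (j + l)) m := pow_apply_pow f l j m
  simpa only [h3, SetLike.mem_coe] using key N l (by omega)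

/-- Classification: every `f`-stable subspace of a cyclic module is a member of
the canonical chain. -/
lemma stable_eq_cyc {N : ℕ} (hfN : f ^ N = 0) (m : V) (W : Submodule k V)
    (hle : W ≤ Cyc f m) (hW : ∀ v ∈ W, f v ∈ W) :
    ∃ j, W = Cyc f ((f ^ j) m) := by
  by_cases hall : ∀ j, W ≤ Cyc f ((f ^ j) m)
  · refine ⟨N, le_antisymm (hall N) ?_⟩
    have h0 : (f ^ N) m = 0 := by rw [hfN]; rfl
    rw [h0, cyc_zero]
    exact bot_le
  · push_neg at hall
    classical
    have hj1spec : ¬ W ≤ Cyc f ((f ^ Nat.find hall) m) := Nat.find_spec hall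
    have hj1ne : Nat.find hall ≠ 0 := by
      intro h0
      apply hj1spec
      rw [h0]
      simpa using hle
    obtain ⟨j, hj⟩ : ∃ j, Nat.find hall = j + 1 := ⟨Nat.find hall - 1, by omega⟩
    rw [hj] at hj1spec
    have hlej : W ≤ Cyc f ((f ^ j) m) := by
      by_contra hcon
      have := Nat.find_le (h := hall) hcon
      omega
    obtain ⟨x, hxW, hxnot⟩ : ∃ x ∈ W, x ∉ Cyc f ((f ^ (j + 1)) m) := by
      by_contra hcon
      push_neg at hcon
      exact hj1spec hcon
    have hxj : x ∈ (k ∙ (f ^ j) m) ⊔ Cyc f (f ((f ^ j) m)) := by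
      rw [← cyc_split]
      exact hlej hxW
    rw [Submodule.mem_sup] at hxj
    obtain ⟨a, ha, y, hy, hay⟩ := hxj
    rw [Submodule.mem_span_singleton] at ha
    obtain ⟨c, rfl⟩ := ha
    have hfy : y ∈ Cyc f ((f ^ (j + 1)) m) := by
      have h1 : f ((f ^ j) m) = (f ^ (j + 1)) m := by
        rw [← Module.End.mul_apply, ← pow_succ']
      rwa [h1] at hy
    have hc : c ≠ 0 := by
      rintro rfl
      apply hxnot
      rw [← hay]
      simpa using hfy
    exact ⟨j, le_antisymm hlej (cyc_le_of_mem f hfN hW hxW hc hfy hay.symm)⟩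

/-- Any two `f`-stable subspaces of a cyclic module are comparable. -/
lemma stable_comparable {N : ℕ} (hfN : f ^ N = 0) (m : V) (W₁ W₂ : Submodule k V)
    (h₁ : W₁ ≤ Cyc f m) (hW₁ : ∀ v ∈ W₁, f v ∈ W₁)
    (h₂ : W₂ ≤ Cyc f m) (hW₂ : ∀ v ∈ W₂, f v ∈ W₂) :
    W₁ ≤ W₂ ∨ W₂ ≤ W₁ := by
  obtain ⟨j₁, rfl⟩ := stable_eq_cyc f hfN m W₁ h₁ hW₁
  obtain ⟨j₂, rfl⟩ := stable_eq_cyc f hfN m W₂ h₂ hW₂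
  rcases le_total j₁ j₂ with h | h
  · right; exact cyc_antitone f m h
  · left; exact cyc_antitone f m h


/-- image of cyc under power -/

lemma pow_apply_mem_cyc (s : ℕ) {u v : V} (hv : v ∈ Cyc f u) :
    (f ^ s) v ∈ Cyc f ((f ^ s) u) := by
  have h1 : Submodule.map (f ^ s) (Cyc f u) ≤ Cyc f ((f ^ s) u) := by
    rw [Cyc, Submodule.map_span, Submodule.span_le]
    rintro w ⟨w', ⟨l, rfl⟩, rfl⟩
    have h3 : (f ^ s) ((f ^ l) u) = (f ^ l) ((f ^ s) u) := by
      rw [pow_apply_pow, pow_apply_pow]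
      exact pow_apply_eq f (by omega) u
    simpa only [h3, SetLike.mem_coe] using pow_mem_cyc f ((f ^ s) u) l
  exact h1 ⟨v, hv, rfl⟩

/-- operator sign rule -/
lemma anti_pow (g : Module.End k V) (hanti : g * f = -(f * g)) (j : ℕ) :
    g * f ^ j = ((-1 : k) ^ j) • (f ^ j * g) := by
  induction j with
  | zero => simp
  | succ i ih =>
    rw [pow_succ, ← mul_assoc, ih, smul_mul_assoc, mul_assoc, hanti, mul_neg, smul_neg,
      pow_succ, mul_comm ((-1 : k) ^ i) (-1 : k), neg_one_mul, neg_smul, ← mul_assoc]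

lemma anti_pow_apply (g : Module.End k V) (hanti : g * f = -(f * g)) (j : ℕ) (v : V) :
    g ((f ^ j) v) = ((-1 : k) ^ j) • ((f ^ j) (g v)) := by
  have h := LinearMap.ext_iff.mp (anti_pow f g hanti j) v
  simpa [Module.End.mul_apply] using h

lemma pow_apply_g (g : Module.End k V) (hanti : g * f = -(f * g)) (j : ℕ) (v : V) :
    (f ^ j) (g v) = ((-1 : k) ^ j) • g ((f ^ j) v) := by
  rw [anti_pow_apply f g hanti j v, smul_smul, ← mul_pow]
  norm_num

/-- Krylov linear independence. -/
lemma krylov_li {h : ℕ} (hh : 1 ≤ h) (hfh : f ^ h = 0) {m : V}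
    (hm : (f ^ (h - 1)) m ≠ 0) :
    LinearIndependent k (fun j : Fin h => (f ^ (j : ℕ)) m) := by
  rw [Fintype.linearIndependent_iff]
  intro c hc
  have key : ∀ j : ℕ, ∀ hj : j < h, c ⟨j, hj⟩ = 0 := by
    intro j
    induction j using Nat.strong_induction_on with
    | _ j IH =>
      intro hj
      have h1 : ∑ i : Fin h, c i • (f ^ ((i : ℕ) + (h - 1 - j))) m = 0 := by
        have h2 := congrArg (fun v => (f ^ (h - 1 - j)) v) hc
        simpa [map_sum, map_smul, pow_apply_pow] using h2
      rw [Finset.sum_eq_single (⟨j, hj⟩ : Fin h)] at h1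
      · have h3 : (f ^ (j + (h - 1 - j))) m = (f ^ (h - 1)) m :=
          pow_apply_eq f (by omega) m
        rw [h3] at h1
        rcases smul_eq_zero.mp h1 with h4 | h4
        · exact h4
        · exact absurd h4 hm
      · rintro ⟨b, hb⟩ _ hne
        rcases Nat.lt_or_ge b j with hbj | hbj
        · rw [IH b hbj hb, zero_smul]
        · have hbj' : j < b := by
            rcases Nat.lt_or_ge j b with h' | h'
            · exact h'
            · exact absurd (Fin.mk.injEq .. ▸ le_antisymm h' hbj : (⟨b, hb⟩ : Fin h) = ⟨j, hj⟩)
                (by exact_mod_cast hne)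
          have h5 : f ^ (b + (h - 1 - j)) = (0 : Module.End k V) :=
            pow_eq_zero_of_le (by omega) hfh
          rw [h5]
          simp
      · intro hmem
        exact absurd (Finset.mem_univ _) hmem
  intro i
  have := key i.1 i.2
  simpa using this


end Cyclic

section Eigen

variable {k V : Type} [Field k] [AddCommGroup V] [Module k V]

lemma exists_eigenvector (h2 : (2 : k) ≠ 0) (f g : Module.End k V) (hg2 : g * g = 1)
    {h : ℕ} {m₀ : V} (hm₀ : (f ^ (h - 1)) m₀ ≠ 0) :
    ∃ (m : V) (ε : k), (ε = 1 ∨ ε = -1) ∧ g m = ε • m ∧ (f ^ (h - 1)) m ≠ 0 := by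
  have ggv : ∀ v : V, g (g v) = v := by
    intro v
    have := LinearMap.ext_iff.mp hg2 v
    simpa [Module.End.mul_apply] using this
  by_cases ha : (f ^ (h - 1)) (m₀ + g m₀) ≠ 0
  · exact ⟨m₀ + g m₀, 1, Or.inl rfl, by simp [map_add, ggv, add_comm], ha⟩
  · by_cases hb : (f ^ (h - 1)) (m₀ - g m₀) ≠ 0
    · refine ⟨m₀ - g m₀, -1, Or.inr rfl, ?_, hb⟩
      simp only [map_sub, ggv, neg_smul, one_smul]
      abel
    · exfalso
      push_neg at ha hb
      have hsum : (f ^ (h - 1)) ((m₀ + g m₀) + (m₀ - g m₀)) = 0 := by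
        rw [map_add, ha, hb, add_zero]
      have h3 : (m₀ + g m₀) + (m₀ - g m₀) = (2 : k) • m₀ := by
        rw [two_smul]; abel
      rw [h3, map_smul] at hsum
      rcases smul_eq_zero.mp hsum with h4 | h4
      · exact h2 h4
      · exact hm₀ h4

end Eigen

section Decomp
variable {k : Type} [Field k]

theorem decompAux (n : ℕ) (h2 : (2 : k) ≠ 0) (d : ℕ) :
    ∀ (V : Type) [AddCommGroup V] [Module k V] [FiniteDimensional k V],
    Module.finrank k V ≤ d → ∀ f g : Module.End k V, f ^ n = 0 → g * g = 1 →
    g * f = -(f * g) →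
    ∃ (ι : Type) (_ : Fintype ι) (p : ι → Submodule k V),
      iSupIndep p ∧ iSup p = ⊤ ∧
      ∀ i, (∃ m : V, p i = Cyc f m) ∧ (∀ v ∈ p i, g v ∈ p i) := by
  induction d with
  | zero =>
    intro V _ _ _ hd f g _ _ _
    have hsub : Subsingleton V := by
      have h0 : Module.finrank k V = 0 := by omega
      exact (Module.finrank_zero_iff (R := k)).mp h0
    refine ⟨Empty, inferInstance, fun i => i.elim, fun i => i.elim, ?_, fun i => i.elim⟩
    have : Subsingleton (Submodule k V) := inferInstance
    exact Subsingleton.elim _ _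
  | succ d IH =>
    intro V _ _ _ hd f g hfn hg2 hanti
    rcases subsingleton_or_nontrivial V with hsub | hnt
    · refine ⟨Empty, inferInstance, fun i => i.elim, fun i => i.elim, ?_, fun i => i.elim⟩
      have : Subsingleton (Submodule k V) := inferInstance
      exact Subsingleton.elim _ _
    · classical
      -- nilpotency index
      have hP : ∃ j, f ^ j = 0 := ⟨n, hfn⟩
      set h := Nat.find hP with hh_def
      have hfh : f ^ h = 0 := Nat.find_spec hP
      have hh1 : 1 ≤ h := by
        rcases Nat.eq_zero_or_pos h with h0 | h0
        · exfalso
          have := hfh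
          rw [h0, pow_zero] at this
          obtain ⟨v, hv⟩ := exists_ne (0 : V)
          apply hv
          have := LinearMap.ext_iff.mp this v
          simpa using this
        · exact h0
      have hpred : f ^ (h - 1) ≠ 0 := Nat.find_min hP (by omega)
      obtain ⟨m₀, hm₀⟩ : ∃ m₀ : V, (f ^ (h - 1)) m₀ ≠ 0 := by
        by_contra hcon
        push_neg at hcon
        exact hpred (LinearMap.ext fun v => by simpa using hcon v)
      obtain ⟨m, ε, hε, hgm, hm⟩ := exists_eigenvector h2 f g hg2 hm₀
      have hε2 : ε * ε = 1 := by rcases hε with rfl | rfl <;> norm_num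
      -- the dual functional
      obtain ⟨φ, hφ⟩ : ∃ φ : Module.Dual k V, φ ((f ^ (h - 1)) m) ≠ 0 := by
        by_contra hc; push_neg at hc
        exact hm ((Module.forall_dual_apply_eq_zero_iff k _).mp hc)
      set c : k := ε * (-1 : k) ^ (h - 1) with hc_def
      have hneg1 : (-1 : k) ^ (h - 1) * (-1 : k) ^ (h - 1) = 1 := by
        rw [← mul_pow]; norm_num
      have hcc : c * c = 1 := by
        calc c * c = (ε * ε) * ((-1 : k) ^ (h - 1) * (-1 : k) ^ (h - 1)) := by ring
        _ = 1 := by rw [hε2, hneg1, one_mul]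
      set ψ : Module.Dual k V := φ + c • (φ ∘ₗ g) with hψ_def
      have ggv : ∀ v : V, g (g v) = v := by
        intro v
        have := LinearMap.ext_iff.mp hg2 v
        simpa [Module.End.mul_apply] using this
      have hψg : ∀ v : V, ψ (g v) = c * ψ v := by
        intro v
        simp only [hψ_def, LinearMap.add_apply, LinearMap.smul_apply, LinearMap.comp_apply,
          smul_eq_mul, ggv]
        calc φ (g v) + c * φ v = c * (φ v + c * φ (g v)) - (c * c - 1) * φ (g v) := by ring
        _ = c * (φ v + c * φ (g v)) := by rw [hcc]; ring
      have hψw : ψ ((f ^ (h - 1)) m) ≠ 0 := by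
        have hgw : g ((f ^ (h - 1)) m) = ((-1 : k) ^ (h - 1) * ε) • (f ^ (h - 1)) m := by
          rw [anti_pow_apply f g hanti, hgm, map_smul, smul_smul]
        have : ψ ((f ^ (h - 1)) m) = (2 : k) * φ ((f ^ (h - 1)) m) := by
          simp only [hψ_def, LinearMap.add_apply, LinearMap.smul_apply, LinearMap.comp_apply,
            smul_eq_mul, hgw, map_smul]
          have : c * ((-1 : k) ^ (h - 1) * ε) = 1 := by
            calc c * ((-1 : k) ^ (h - 1) * ε)
                = (ε * ε) * ((-1 : k) ^ (h - 1) * (-1 : k) ^ (h - 1)) := by rw [hc_def]; ring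
            _ = 1 := by rw [hε2, hneg1, one_mul]
          linear_combination φ ((f ^ (h - 1)) m) * this
        rw [this]
        exact mul_ne_zero h2 hφ
      -- the complement and the cyclic part
      set W : Submodule k V := Cyc f m with hW_def
      set U : Submodule k V := ⨅ j : Fin h, LinearMap.ker (ψ ∘ₗ (f ^ (j : ℕ))) with hU_def
      have hUmem : ∀ v : V, v ∈ U ↔ ∀ j : ℕ, j < h → ψ ((f ^ j) v) = 0 := by
        intro v
        rw [hU_def]
        simp only [Submodule.mem_iInf, LinearMap.mem_ker, LinearMap.comp_apply]
        constructor
        · intro hv j hj; exact hv ⟨j, hj⟩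
        · intro hv j; exact hv j j.2
      have hUmem' : ∀ v ∈ U, ∀ j : ℕ, ψ ((f ^ j) v) = 0 := by
        intro v hv j
        rcases Nat.lt_or_ge j h with hj | hj
        · exact (hUmem v).mp hv j hj
        · have h0 : f ^ j = (0 : Module.End k V) := pow_eq_zero_of_le hj hfh
          rw [h0]; simp
      have hWU : W ⊓ U = ⊥ := by
        rw [eq_bot_iff]
        rintro x ⟨hxW, hxU⟩
        rw [Submodule.mem_bot]
        by_contra hx0
        have hxh : ¬ x ∈ Cyc f ((f ^ h) m) := by
          have h0 : (f ^ h) m = 0 := by rw [hfh]; rfl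
          rw [h0, cyc_zero]
          simpa using hx0
        have hex : ∃ j, ¬ x ∈ Cyc f ((f ^ j) m) := ⟨h, hxh⟩
        have hspec := Nat.find_spec hex
        have hne0 : Nat.find hex ≠ 0 := by
          intro h0
          apply hspec
          rw [h0]
          have : (f ^ 0) m = m := by simp
          rw [this]
          exact hxW
        obtain ⟨j, hj⟩ : ∃ j, Nat.find hex = j + 1 := ⟨Nat.find hex - 1, by omega⟩
        have hjh : j + 1 ≤ h := by have := Nat.find_le (h := hex) hxh; omega
        have hxj : x ∈ Cyc f ((f ^ j) m) := by
          by_contra hcon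
          have := Nat.find_le (h := hex) hcon; omega
        rw [hj] at hspec
        have hxsup : x ∈ (k ∙ (f ^ j) m) ⊔ Cyc f (f ((f ^ j) m)) := by
          rw [← cyc_split]; exact hxj
        rw [Submodule.mem_sup] at hxsup
        obtain ⟨a, ha, y, hy, hay⟩ := hxsup
        rw [Submodule.mem_span_singleton] at ha
        obtain ⟨c', rfl⟩ := ha
        have hfy : y ∈ Cyc f ((f ^ (j + 1)) m) := by
          have h1 : f ((f ^ j) m) = (f ^ (j + 1)) m := by
            rw [← Module.End.mul_apply, ← pow_succ']
          rwa [h1] at hy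
        have hc' : c' ≠ 0 := by
          rintro rfl
          apply hspec
          rw [← hay]
          simpa using hfy
        have hyzero : (f ^ (h - 1 - j)) y = 0 := by
          have h1 := pow_apply_mem_cyc f (h - 1 - j) hfy
          have h2 : (f ^ (h - 1 - j)) ((f ^ (j + 1)) m) = (f ^ h) m := by
            rw [pow_apply_pow]
            exact pow_apply_eq f (by omega) m
          rw [h2] at h1
          have h3 : (f ^ h) m = 0 := by rw [hfh]; rfl
          rw [h3, cyc_zero, Submodule.mem_bot] at h1
          exact h1
        have hval : ψ ((f ^ (h - 1 - j)) x) = c' * ψ ((f ^ (h - 1)) m) := by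
          have h3 : j + (h - 1 - j) = h - 1 := by omega
          rw [← hay, map_add, map_smul, pow_apply_pow, hyzero, add_zero, map_smul, h3,
            smul_eq_mul]
        have h4 := hUmem' x hxU (h - 1 - j)
        rw [h4] at hval
        exact mul_ne_zero hc' hψw hval.symm
      have hWrank : h ≤ Module.finrank k W := by
        have hli := krylov_li f hh1 hfh hm
        have hle : Submodule.span k (Set.range fun j : Fin h => (f ^ (j : ℕ)) m) ≤ W := by
          rw [Submodule.span_le]
          rintro w ⟨j, rfl⟩
          exact pow_mem_cyc f m j
        have heq := finrank_span_eq_card hli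
        calc h = Fintype.card (Fin h) := by simp
        _ = Module.finrank k (Submodule.span k (Set.range fun j : Fin h => (f ^ (j : ℕ)) m)) :=
            heq.symm
        _ ≤ Module.finrank k W := Submodule.finrank_mono hle
      have hUrank : Module.finrank k V ≤ Module.finrank k U + h := by
        have hker : LinearMap.ker (LinearMap.pi (fun j : Fin h => ψ ∘ₗ (f ^ (j : ℕ)))) = U := by
          rw [LinearMap.ker_pi, hU_def]
        have h1 := LinearMap.finrank_range_add_finrank_ker
          (LinearMap.pi (fun j : Fin h => ψ ∘ₗ (f ^ (j : ℕ))))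
        have h2 : Module.finrank k
            (LinearMap.range (LinearMap.pi (fun j : Fin h => ψ ∘ₗ (f ^ (j : ℕ))))) ≤ h := by
          have h3 := Submodule.finrank_le
            (LinearMap.range (LinearMap.pi (fun j : Fin h => ψ ∘ₗ (f ^ (j : ℕ)))))
          rwa [Module.finrank_pi, Fintype.card_fin] at h3
        rw [hker] at h1
        omega
      have hfin1 := Submodule.finrank_sup_add_finrank_inf_eq W U
      rw [hWU, finrank_bot] at hfin1
      have hle1 : Module.finrank k ↥(W ⊔ U) ≤ Module.finrank k V := Submodule.finrank_le _
      have hsupWU : W ⊔ U = ⊤ := by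
        apply Submodule.eq_top_of_finrank_eq
        have := Submodule.finrank_le W
        have := Submodule.finrank_le U
        omega
      have hrksum : Module.finrank k W + Module.finrank k U = Module.finrank k V := by
        rw [hsupWU] at hfin1
        rw [← hfin1]
        simp [finrank_top]
      have hUlt : Module.finrank k U < Module.finrank k V := by
        have hpos : 0 < Module.finrank k V := Module.finrank_pos
        omega
      -- invariance of U
      have hUf : ∀ v ∈ U, f v ∈ U := by
        intro v hv
        rw [hUmem]
        intro j hj
        have h1 : (f ^ j) (f v) = (f ^ (1 + j)) v := by
          have : f v = (f ^ 1) v := by simp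
          rw [this, pow_apply_pow]
        rw [h1]
        exact hUmem' v hv (1 + j)
      have hUg : ∀ v ∈ U, g v ∈ U := by
        intro v hv
        rw [hUmem]
        intro j hj
        rw [pow_apply_g f g hanti, map_smul, smul_eq_mul, hψg, hUmem' v hv j]
        ring
      -- restricted endomorphisms
      have hpt : ∀ v : V, g (f v) = -(f (g v)) := by
        intro v
        have := LinearMap.ext_iff.mp hanti v
        simpa [Module.End.mul_apply] using this
      have hfUn : (f.restrict hUf) ^ n = 0 := by
        rw [Module.End.pow_restrict]
        ext x
        rw [LinearMap.restrict_coe_apply, hfn]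
        rfl
      have hgU2 : (g.restrict hUg) * (g.restrict hUg) = 1 := by
        ext x
        simp [Module.End.mul_apply, LinearMap.restrict_coe_apply, ggv]
      have hantiU : (g.restrict hUg) * (f.restrict hUf)
          = -((f.restrict hUf) * (g.restrict hUg)) := by
        ext x
        simp [Module.End.mul_apply, LinearMap.restrict_coe_apply, hpt]
      obtain ⟨ι, hι, p', hind', hsup', hprop'⟩ :=
        IH ↥U (by omega) (f.restrict hUf) (g.restrict hUg) hfUn hgU2 hantiU
      -- coercion lemmas
      have hcoe : ∀ (j : ℕ) (u : ↥U), (((f.restrict hUf) ^ j) u : V) = (f ^ j) (u : V) := by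
        intro j u
        induction j with
        | zero => simp
        | succ i ih =>
          rw [pow_succ', pow_succ', Module.End.mul_apply, Module.End.mul_apply,
            LinearMap.restrict_coe_apply, ih]
      have hgcoe : ∀ u : ↥U, ((g.restrict hUg) u : V) = g (u : V) := fun u =>
        LinearMap.restrict_coe_apply g hUg u
      letI := hι
      refine ⟨Option ι, inferInstance,
        fun o => Option.elim o W (fun i => (p' i).map U.subtype), ?_, ?_, ?_⟩
      · -- independence
        rw [iSupIndep_def]
        intro o
        match o with
        | none =>
          have hle : (⨆ j, ⨆ (_ : j ≠ (none : Option ι)),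
              Option.elim j W (fun i => (p' i).map U.subtype)) ≤ U := by
            apply iSup_le
            intro j
            apply iSup_le
            intro hj
            match j with
            | none => exact absurd rfl hj
            | some i => exact Submodule.map_subtype_le U (p' i)
          exact (disjoint_iff.mpr hWU).mono_right hle
        | some i =>
          have hle : (⨆ j, ⨆ (_ : j ≠ (some i : Option ι)),
              Option.elim j W (fun i => (p' i).map U.subtype))
              ≤ W ⊔ Submodule.map U.subtype (⨆ i', ⨆ (_ : i' ≠ i), p' i') := by
            apply iSup_le
            intro j
            apply iSup_le
            intro hj
            match j with
            | none => exact le_sup_left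
            | some i' =>
              have hne : i' ≠ i := fun hcon => hj (by rw [hcon])
              refine le_trans ?_ le_sup_right
              apply Submodule.map_mono
              exact le_iSup₂ (f := fun (i' : ι) (_ : i' ≠ i) => p' i') i' hne
          apply Disjoint.mono_right hle
          rw [Submodule.disjoint_def]
          intro x hx hxB
          rw [Submodule.mem_sup] at hxB
          obtain ⟨w, hw, u', hu', hwu⟩ := hxB
          have hxU : x ∈ U := Submodule.map_subtype_le U (p' i) hx
          have hu'U : u' ∈ U := Submodule.map_subtype_le U _ hu'
          have hw0 : w = 0 := by
            have hwW : w ∈ W ⊓ U := by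
              refine ⟨hw, ?_⟩
              have hwx : w = x - u' := by rw [← hwu]; abel
              rw [hwx]
              exact U.sub_mem hxU hu'U
            rw [hWU] at hwW
            exact hwW
          have hxmap : x ∈ Submodule.map U.subtype
              ((p' i) ⊓ ⨆ i', ⨆ (_ : i' ≠ i), p' i') := by
            rw [Submodule.map_inf _ (Submodule.injective_subtype U)]
            refine ⟨hx, ?_⟩
            rw [← hwu, hw0, zero_add]
            exact hu'
          rw [disjoint_iff.mp (hind' i), Submodule.map_bot, Submodule.mem_bot] at hxmap
          exact hxmap
      · -- supremum
        rw [iSup_option (f := fun o => Option.elim o W (fun i => (p' i).map U.subtype))]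
        simp only [Option.elim]
        rw [← Submodule.map_iSup, hsup', Submodule.map_top, Submodule.range_subtype]
        exact hsupWU
      · -- each summand
        intro o
        match o with
        | none =>
          constructor
          · exact ⟨m, rfl⟩
          · intro v hv
            have hv' : v ∈ Submodule.span k (Set.range fun j : ℕ => (f ^ j) m) := hv
            show g v ∈ Submodule.span k (Set.range fun j : ℕ => (f ^ j) m)
            clear hv
            rename' hv' => hv
            induction hv using Submodule.span_induction with
            | mem x hx =>
              obtain ⟨j, rfl⟩ := hx
              show g ((f ^ j) m) ∈ _
              rw [anti_pow_apply f g hanti, hgm, map_smul, smul_smul]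
              exact Submodule.smul_mem _ _ (pow_mem_cyc f m j)
            | zero => simp
            | add x y _ _ hx hy => rw [map_add]; exact Submodule.add_mem _ hx hy
            | smul a x _ hx => rw [map_smul]; exact Submodule.smul_mem _ a hx
        | some i =>
          obtain ⟨⟨m', hm'⟩, hstab⟩ := hprop' i
          constructor
          · refine ⟨(m' : V), ?_⟩
            show Submodule.map U.subtype (p' i) = Cyc f (m' : V)
            rw [hm', Cyc, Cyc, Submodule.map_span]
            congr 1
            ext w
            simp only [Set.mem_image, Set.mem_range]
            constructor
            · rintro ⟨w', ⟨j, rfl⟩, rfl⟩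
              exact ⟨j, (hcoe j m').symm⟩
            · rintro ⟨j, rfl⟩
              exact ⟨((f.restrict hUf) ^ j) m', ⟨j, rfl⟩, hcoe j m'⟩
          · rintro v ⟨u, hu, rfl⟩
            exact ⟨(g.restrict hUg) u, hstab u hu, hgcoe u⟩


end Decomp

attribute [local instance] RestrictScalars.moduleOrig

/-- every finite-dimensional right `S_n`-module is (isomorphic to)
a direct sum of uniserial modules: it is the internal direct sum of a finite
family of uniserial submodules. -/
theorem stmt3 (k : Type) [Field k] (hk : ringChar k ≠ 2) (n : ℕ) (hn : 1 ≤ n)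
    (M : Type) [AddCommGroup M] [Module (Sn k n)ᵐᵒᵖ M]
    (hfd : @FiniteDimensional k (RestrictScalars k (Sn k n)ᵐᵒᵖ M) _ _
      (RestrictScalars.module k (Sn k n)ᵐᵒᵖ M)) :
    ∃ (ι : Type) (_ : Fintype ι) (_ : DecidableEq ι)
      (p : ι → Submodule (Sn k n)ᵐᵒᵖ M),
      DirectSum.IsInternal p ∧ ∀ i, IsUniserialMod (Sn k n)ᵐᵒᵖ ↥(p i) := by
  classical
  have h2 : (2 : k) ≠ 0 := Ring.two_ne_zero hk
  set S := (Sn k n)ᵐᵒᵖ with hS_def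
  set V := RestrictScalars k S M with hV_def
  letI : AddCommMonoid V := AddCommGroup.toAddCommMonoid
  letI : Module k V := { RestrictScalars.module k S M with }
  letI : Module S V := { RestrictScalars.moduleOrig k S M with }
  -- the two distinguished elements of S
  set tS : S := MulOpposite.op ((RingQuot.mkAlgHom k (SRel k n)) (tF k)) with htS_def
  set gS : S := MulOpposite.op ((RingQuot.mkAlgHom k (SRel k n)) (gF k)) with hgS_def
  set L : S →ₐ[k] Module.End k V := RestrictScalars.lsmul k S M with hL_def
  have hLapp : ∀ (a : S) (v : V), (L a) v = a • v := fun a v => rfl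
  -- algebra relations in S
  have htn : tS ^ n = 0 := by
    rw [htS_def, ← MulOpposite.op_pow, ← map_pow]
    rw [RingQuot.mkAlgHom_rel k (SRel.tpow (k := k) (n := n))]
    simp
  have hgg : gS * gS = 1 := by
    rw [hgS_def, ← MulOpposite.op_mul, ← map_mul]
    rw [RingQuot.mkAlgHom_rel k (SRel.gsq (k := k) (n := n))]
    simp
  have hanti : gS * tS = -(tS * gS) := by
    have hrel : (RingQuot.mkAlgHom k (SRel k n)) (gF k * tF k)
        = -((RingQuot.mkAlgHom k (SRel k n)) (tF k * gF k)) := by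
      have h0 := RingQuot.mkAlgHom_rel k (SRel.anti (k := k) (n := n))
      rw [map_add, map_zero] at h0
      exact eq_neg_of_add_eq_zero_left h0
    rw [htS_def, hgS_def, ← MulOpposite.op_mul, ← map_mul, ← MulOpposite.op_mul, ← map_mul,
      hrel, MulOpposite.op_neg, neg_neg]
  -- endomorphism relations
  have hfn : (L tS) ^ n = 0 := by rw [← map_pow, htn, map_zero]
  have hg2 : (L gS) * (L gS) = 1 := by rw [← map_mul, hgg, map_one]
  have hantiE : (L gS) * (L tS) = -((L tS) * (L gS)) := by
    rw [← map_mul, hanti, map_neg, map_mul]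
  haveI : FiniteDimensional k V := hfd
  obtain ⟨ι, hι, p, hind, hsupT, hprop⟩ :=
    decompAux n h2 (Module.finrank k V) V le_rfl (L tS) (L gS) hfn hg2 hantiE
  -- stability of each p i under the full S-action
  have hfstab : ∀ i, ∀ v ∈ p i, tS • v ∈ p i := by
    intro i v hv
    obtain ⟨⟨m, hm⟩, _⟩ := hprop i
    rw [hm] at hv ⊢
    have := cyc_f_stable (L tS) hv
    rwa [hLapp] at this
  have hgstab : ∀ i, ∀ v ∈ p i, gS • v ∈ p i := by
    intro i v hv
    have := (hprop i).2 v hv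
    rwa [hLapp] at this
  have hSstab : ∀ i (a : S), ∀ v ∈ p i, a • v ∈ p i := by
    intro i a
    obtain ⟨x, hx⟩ := RingQuot.mkAlgHom_surjective k (SRel k n) a.unop
    have hx' : MulOpposite.op ((RingQuot.mkAlgHom k (SRel k n)) x) = a := by
      rw [hx]; simp
    rw [← hx']
    clear hx hx'
    refine FreeAlgebra.induction k (Fin 2)
      (motive := fun y => ∀ v ∈ p i,
        (MulOpposite.op ((RingQuot.mkAlgHom k (SRel k n)) y)) • v ∈ p i)
      ?_ ?_ ?_ ?_ x
    · intro r v hv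
      rw [AlgHom.commutes, ← MulOpposite.algebraMap_apply, algebraMap_smul]
      exact (p i).smul_mem r hv
    · intro y v hv
      fin_cases y
      · exact hfstab i v hv
      · exact hgstab i v hv
    · intro a b ha hb v hv
      rw [map_mul, MulOpposite.op_mul, mul_smul]
      exact hb _ (ha _ hv)
    · intro a b ha hb v hv
      rw [map_add, MulOpposite.op_add, add_smul]
      exact (p i).add_mem (ha _ hv) (hb _ hv)
  -- upgrade to S-submodules
  set P : ι → Submodule S V := fun i =>
    { carrier := p i
      add_mem' := fun {a b} ha hb => (p i).add_mem ha hb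
      zero_mem' := (p i).zero_mem
      smul_mem' := fun a {v} hv => hSstab i a v hv } with hP_def
  have hsupP : ⨆ i, P i = ⊤ := by
    rw [eq_top_iff]
    intro v _
    have hv : v ∈ ⨆ i, p i := by rw [hsupT]; trivial
    refine Submodule.iSup_induction p (motive := fun x => x ∈ ⨆ i, P i) hv
      (fun i x hx => ?_) (zero_mem _) (fun x y hx hy => add_mem hx hy)
    exact Submodule.mem_iSup_of_mem i hx
  have hindP : iSupIndep P := by
    rw [iSupIndep_def]
    intro i
    rw [Submodule.disjoint_def]
    intro x hxi hxrest
    have hxrest' : x ∈ ⨆ j, ⨆ (_ : j ≠ i), p j := by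
      rw [iSup_subtype'] at hxrest ⊢
      refine Submodule.iSup_induction _
        (motive := fun y => y ∈ ⨆ (z : {j // j ≠ i}), p z.1) hxrest
        (fun j y hy => ?_) (zero_mem _) (fun a b ha hb => add_mem ha hb)
      exact Submodule.mem_iSup_of_mem j hy
    exact Submodule.disjoint_def.mp (iSupIndep_def.mp hind i) x hxi hxrest'
  have hinternal : DirectSum.IsInternal P :=
    (DirectSum.isInternal_submodule_iff_iSupIndep_and_iSup_eq_top P).mpr ⟨hindP, hsupP⟩
  have huni : ∀ i, IsUniserialMod S ↥(P i) := by
    intro i W₁ W₂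
    obtain ⟨⟨m, hm⟩, _⟩ := hprop i
    have hle : ∀ (W : Submodule S ↥(P i)),
        Submodule.restrictScalars k (Submodule.map (P i).subtype W) ≤ Cyc (L tS) m := by
      rintro W v ⟨u, _, rfl⟩
      have h1 : (u : V) ∈ p i := u.2
      rwa [hm] at h1
    have hstabW : ∀ (W : Submodule S ↥(P i)),
        ∀ v ∈ Submodule.restrictScalars k (Submodule.map (P i).subtype W),
          (L tS) v ∈ Submodule.restrictScalars k (Submodule.map (P i).subtype W) := by
      rintro W v ⟨u, hu, rfl⟩
      exact ⟨tS • u, W.smul_mem tS hu, rfl⟩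
    rcases stable_comparable (L tS) hfn m _ _ (hle W₁) (hstabW W₁) (hle W₂) (hstabW W₂)
      with h | h
    · left
      exact (Submodule.map_le_map_iff_of_injective
        (Submodule.injective_subtype (P i)) W₁ W₂).mp (fun x hx => h hx)
    · right
      exact (Submodule.map_le_map_iff_of_injective
        (Submodule.injective_subtype (P i)) W₂ W₁).mp (fun x hx => h hx)
  exact ⟨ι, hι, Classical.decEq ι, P, hinternal, huni⟩
end
end

section
/- The algebra S_n is self-injective: S_n is injective as a right module over itself. -/
noncomputable section

section Frobenius

open MulOpposite

variable {k : Type} [Field k] {R : Type} [Ring R] [Algebra k R] [FiniteDimensional k R]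

theorem frobenius_selfinjective (lam : R →ₗ[k] k)
    (h : ∀ r : R, (∀ s : R, lam (r * s) = 0) → r = 0) :
    Module.Injective Rᵐᵒᵖ R := by
  apply Module.Baer.injective
  -- the pairing map Θ r = lam (r * ·)
  set Theta : R →ₗ[k] (R →ₗ[k] k) :=
    (LinearMap.llcomp k R R k lam).comp (LinearMap.mul k R) with hTheta
  have Theta_apply : ∀ r u : R, Theta r u = lam (r * u) := fun r u => rfl
  have Theta_inj : Function.Injective Theta := by
    rw [injective_iff_map_eq_zero]
    intro r hr
    exact h r fun s => by rw [← Theta_apply]; simpa using congrArg (fun F : R →ₗ[k] k => F s) hr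
  have Theta_surj : Function.Surjective Theta :=
    (LinearMap.injective_iff_surjective_of_finrank_eq_finrank
      (Subspace.dual_finrank_eq (V := R)).symm).mp Theta_inj
  set E : R ≃ₗ[k] (R →ₗ[k] k) := LinearEquiv.ofBijective Theta ⟨Theta_inj, Theta_surj⟩ with hE
  intro I f
  -- restrict scalars of I to k
  set J : Submodule k Rᵐᵒᵖ := I.restrictScalars k with hJ
  -- the functional on J
  have fsmul : ∀ (c : k) (x : Rᵐᵒᵖ) (hx : x ∈ I),
      f ⟨c • x, I.smul_of_tower_mem c hx⟩ = c • f ⟨x, hx⟩ := by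
    intro c x hx
    have : (c • x : Rᵐᵒᵖ) = (algebraMap k Rᵐᵒᵖ c) • x := (algebraMap_smul _ _ _).symm
    have h2 : (⟨c • x, I.smul_of_tower_mem c hx⟩ : I)
        = (algebraMap k Rᵐᵒᵖ c) • ⟨x, hx⟩ := Subtype.ext (by simpa using this)
    rw [h2, map_smul]
    show (algebraMap k Rᵐᵒᵖ c) • f ⟨x, hx⟩ = c • f ⟨x, hx⟩
    rw [algebraMap_smul]
  set phi : J →ₗ[k] k :=
    { toFun := fun a => lam (f ⟨a.1, a.2⟩)
      map_add' := by
        rintro ⟨x, hx⟩ ⟨y, hy⟩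
        have : f ⟨x + y, I.add_mem hx hy⟩ = f ⟨x, hx⟩ + f ⟨y, hy⟩ := by
          rw [← map_add]; rfl
        simp [this]
      map_smul' := by
        rintro c ⟨x, hx⟩
        simp only [RingHom.id_apply, smul_eq_mul]
        have : f ⟨c • x, I.smul_of_tower_mem c hx⟩ = c • f ⟨x, hx⟩ := fsmul c x hx
        show lam (f ⟨c • x, _⟩) = c * lam (f ⟨x, hx⟩)
        rw [this, map_smul, smul_eq_mul] } with hphi
  obtain ⟨C, hC⟩ := Submodule.exists_isCompl J
  set Phi : Rᵐᵒᵖ →ₗ[k] k := phi ∘ₗ (J.linearProjOfIsCompl C hC) with hPhi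
  have Phi_eq : ∀ (x : Rᵐᵒᵖ) (hx : x ∈ I), Phi x = lam (f ⟨x, hx⟩) := by
    intro x hx
    have : Phi x = phi ⟨x, hx⟩ := by
      simp only [hPhi, LinearMap.comp_apply]
      exact congrArg phi (Submodule.projectionOnto_apply_left hC ⟨x, hx⟩)
    rw [this]; rfl
  -- right multiplication operators
  set rmul : Rᵐᵒᵖ → (R →ₗ[k] Rᵐᵒᵖ) := fun s =>
    { toFun := fun u => op u * s
      map_add' := by intro u v; simp [add_mul]
      map_smul' := by intro c u; simp [smul_mul_assoc] } with hrmul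
  set psi : Rᵐᵒᵖ → (R →ₗ[k] k) := fun s => Phi ∘ₗ rmul s with hpsi
  set F0 : Rᵐᵒᵖ → R := fun s => E.symm (psi s) with hF0
  have key : ∀ s : Rᵐᵒᵖ, ∀ u : R, lam (F0 s * u) = Phi (op u * s) := by
    intro s u
    have : Theta (F0 s) = psi s := E.apply_symm_apply (psi s)
    exact congrArg (fun F : R →ₗ[k] k => F u) this
  refine ⟨{ toFun := F0
            map_add' := ?_
            map_smul' := ?_ }, ?_⟩
  · intro s s'
    have : psi (s + s') = psi s + psi s' := by
      ext u; simp [hpsi, hrmul, mul_add]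
    simp [hF0, this]
  · intro s₀ s
    simp only [RingHom.id_apply]
    have h1 : Theta (s₀ • F0 s) = psi (s₀ * s) := by
      ext u
      have e1 : s₀ • F0 s = F0 s * s₀.unop := rfl
      rw [Theta_apply, e1, mul_assoc, key s (s₀.unop * u)]
      show Phi (op (s₀.unop * u) * s) = Phi (op u * (s₀ * s))
      rw [op_mul, op_unop, mul_assoc]
    have : E.symm (psi (s₀ * s)) = s₀ • F0 s := by
      rw [← h1]; exact E.symm_apply_apply _
    simpa [hF0] using this
  · intro x hx
    show F0 x = f ⟨x, hx⟩
    apply Theta_inj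
    ext u
    rw [Theta_apply, key x u, Theta_apply]
    have hmem : op u * x ∈ I := I.smul_mem (op u) hx
    rw [Phi_eq _ hmem]
    have : (⟨op u * x, hmem⟩ : I) = (op u) • ⟨x, hx⟩ := rfl
    rw [this, map_smul]
    rfl

end Frobenius

namespace SnAux

open Polynomial

variable (k : Type) [Field k] (n : ℕ)

abbrev M := AdjoinRoot (Polynomial.X ^ n : Polynomial k)

def x : M k n := AdjoinRoot.root _

theorem x_pow : (x k n) ^ n = 0 := by
  have : (x k n) ^ n = AdjoinRoot.mk (X ^ n : Polynomial k) (X ^ n) := by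
    rw [map_pow, AdjoinRoot.mk_X]; rfl
  rw [this, AdjoinRoot.mk_self]

theorem aeval_neg_x : Polynomial.aeval (-(x k n)) (X ^ n : Polynomial k) = 0 := by
  rw [map_pow, Polynomial.aeval_X, neg_pow, x_pow, mul_zero]

def sg : M k n →ₐ[k] M k n :=
  AdjoinRoot.liftAlgHom _ (Algebra.ofId k _) (-(x k n)) (aeval_neg_x k n)

theorem sg_x : sg k n (x k n) = -(x k n) := by
  unfold sg x
  exact AdjoinRoot.liftAlgHom_root _ _ _ (aeval_neg_x k n)

theorem sg_sg (m : M k n) : sg k n (sg k n m) = m := by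
  have : (sg k n).comp (sg k n) = AlgHom.id k (M k n) := by
    apply AdjoinRoot.algHom_ext
    show sg k n (sg k n (x k n)) = x k n
    rw [sg_x, map_neg, sg_x, neg_neg]
  exact AlgHom.congr_fun this m

abbrev V := M k n × M k n

def T : V k n →ₗ[k] V k n :=
  (LinearMap.mulLeft k (x k n)).prodMap (LinearMap.mulLeft k (x k n))

def G : V k n →ₗ[k] V k n :=
  LinearMap.prod ((sg k n).toLinearMap ∘ₗ LinearMap.snd k (M k n) (M k n))
    ((sg k n).toLinearMap ∘ₗ LinearMap.fst k (M k n) (M k n))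

@[simp] theorem T_apply (v : V k n) : T k n v = (x k n * v.1, x k n * v.2) := rfl

@[simp] theorem G_apply (v : V k n) : G k n v = (sg k n v.2, sg k n v.1) := rfl

theorem T_pow (m : ℕ) : ∀ v : V k n,
    ((T k n) ^ m) v = ((x k n) ^ m * v.1, (x k n) ^ m * v.2) := by
  induction m with
  | zero => intro v; simp
  | succ m ih =>
    intro v
    rw [pow_succ']
    show (T k n) (((T k n) ^ m) v) = _
    rw [ih v, T_apply]
    simp [pow_succ', mul_assoc, mul_comm, mul_left_comm]

theorem T_pow_n : (T k n) ^ n = 0 := by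
  apply LinearMap.ext; intro v
  rw [T_pow, x_pow]
  simp

theorem G_G : (G k n) * (G k n) = 1 := by
  apply LinearMap.ext; intro v
  show G k n (G k n v) = v
  simp [sg_sg]

theorem GT_TG : (G k n) * (T k n) + (T k n) * (G k n) = 0 := by
  apply LinearMap.ext; intro v
  show G k n (T k n v) + T k n (G k n v) = 0
  simp only [T_apply, G_apply, map_mul, sg_x, Prod.ext_iff, Prod.fst_add, Prod.snd_add,
    Prod.fst_zero, Prod.snd_zero]
  constructor <;> ring

end SnAux

namespace SnAux2

open SnAux

variable (k : Type) [Field k] (n : ℕ)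

/-- the representation of the free algebra -/
def rho0 : FreeAlgebra k (Fin 2) →ₐ[k] Module.End k (V k n) :=
  FreeAlgebra.lift k ![T k n, G k n]

@[simp] theorem rho0_t : rho0 k n (tF k) = T k n := by
  rw [tF, rho0, FreeAlgebra.lift_ι_apply]; rfl

@[simp] theorem rho0_g : rho0 k n (gF k) = G k n := by
  rw [gF, rho0, FreeAlgebra.lift_ι_apply]; rfl

theorem rho0_rel : ∀ ⦃a b : FreeAlgebra k (Fin 2)⦄, SRel k n a b → rho0 k n a = rho0 k n b := by
  rintro a b (h | h | h)
  · rw [map_pow, rho0_t, map_zero, T_pow_n]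
  · rw [map_mul, rho0_g, map_one, G_G]
  · rw [map_add, map_mul, map_mul, rho0_g, rho0_t, map_zero, GT_TG]

/-- the representation of `Sn` -/
def rho : Sn k n →ₐ[k] Module.End k (V k n) :=
  RingQuot.liftAlgHom k ⟨rho0 k n, rho0_rel k n⟩

def t : Sn k n := RingQuot.mkAlgHom k (SRel k n) (tF k)

def g : Sn k n := RingQuot.mkAlgHom k (SRel k n) (gF k)

@[simp] theorem rho_t : rho k n (t k n) = T k n := by
  rw [rho, t, RingQuot.liftAlgHom_mkAlgHom_apply, rho0_t]

@[simp] theorem rho_g : rho k n (g k n) = G k n := by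
  rw [rho, g, RingQuot.liftAlgHom_mkAlgHom_apply, rho0_g]

theorem t_pow_n : (t k n) ^ n = 0 := by
  rw [t, ← map_pow]
  rw [RingQuot.mkAlgHom_rel k SRel.tpow, map_zero]

theorem g_g : (g k n) * (g k n) = 1 := by
  rw [g, ← map_mul, RingQuot.mkAlgHom_rel k SRel.gsq, map_one]

theorem gt_eq : (g k n) * (t k n) = -((t k n) * (g k n)) := by
  have h : (g k n) * (t k n) + (t k n) * (g k n) = 0 := by
    rw [g, t, ← map_mul, ← map_mul, ← map_add, RingQuot.mkAlgHom_rel k SRel.anti, map_zero]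
  exact eq_neg_of_add_eq_zero_left h

variable {k n}

theorem smul_mul (c : k) (a b : Sn k n) : (c • a) * b = c • (a * b) := smul_mul_assoc c a b
theorem mul_smul' (c : k) (a b : Sn k n) : a * (c • b) = c • (a * b) := mul_smul_comm c a b
theorem mulneg (a b : Sn k n) : a * -b = -(a * b) := mul_neg a b
theorem negmul (a b : Sn k n) : -a * b = -(a * b) := neg_mul a b
theorem smulneg (c : k) (a : Sn k n) : c • -a = -(c • a) := smul_neg c a
theorem negsmul (c : k) (a : Sn k n) : (-c) • a = -(c • a) := neg_smul c a
theorem smulsmul (c d : k) (a : Sn k n) : c • d • a = (c * d) • a := smul_smul c d a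
theorem onesmul (a : Sn k n) : (1 : k) • a = a := one_smul k a
theorem zerosmul (a : Sn k n) : (0 : k) • a = 0 := zero_smul k a
theorem smulzero (c : k) : c • (0 : Sn k n) = 0 := smul_zero c
theorem mulzero (a : Sn k n) : a * 0 = 0 := mul_zero a
theorem zeromul (a : Sn k n) : 0 * a = 0 := zero_mul a

variable (k n)

theorem g_t_pow (m : ℕ) : (g k n) * (t k n) ^ m = ((-1 : k) ^ m) • ((t k n) ^ m * (g k n)) := by
  induction m with
  | zero => simp
  | succ m ih =>
    have h1 : g k n * t k n ^ (m + 1) = (g k n * t k n ^ m) * t k n := by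
      rw [pow_succ, mul_assoc]
    have h2 : (-1 : k) ^ (m + 1) = -((-1 : k) ^ m) := by ring
    rw [h1, ih, smul_mul, mul_assoc, gt_eq, mulneg, smulneg, h2, negsmul,
      pow_succ (t k n) m, mul_assoc]

def b : Fin n × Fin 2 → Sn k n := fun p => t k n ^ (p.1 : ℕ) * g k n ^ (p.2 : ℕ)

def ev : Sn k n →ₗ[k] V k n where
  toFun r := rho k n r (1, 0)
  map_add' r s := by show (rho k n) (r + s) (1,0) = _; rw [map_add]; rfl
  map_smul' c r := by show (rho k n) (c • r) (1,0) = _; rw [map_smul]; rfl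

theorem rho_b (p : Fin n × Fin 2) :
    rho k n (b k n p) = (T k n) ^ (p.1 : ℕ) * (G k n) ^ (p.2 : ℕ) := by
  rw [b, map_mul, map_pow, map_pow, rho_t, rho_g]

theorem ev_b (p : Fin n × Fin 2) :
    ev k n (b k n p) =
      if p.2 = 0 then ((x k n) ^ (p.1 : ℕ), 0) else (0, (x k n) ^ (p.1 : ℕ)) := by
  obtain ⟨i, j⟩ := p
  show (rho k n) (b k n (i, j)) (1, 0) = _
  rw [rho_b]
  fin_cases j
  · show ((T k n) ^ (i : ℕ) * (G k n) ^ 0) (1, 0) = _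
    rw [pow_zero, mul_one, T_pow]
    simp
  · show ((T k n) ^ (i : ℕ) * (G k n) ^ 1) (1, 0) = _
    rw [pow_one]
    show ((T k n) ^ (i : ℕ)) (G k n (1, 0)) = _
    rw [G_apply, T_pow]
    simp

def pb : PowerBasis k (M k n) := AdjoinRoot.powerBasis' (Polynomial.monic_X_pow n)

theorem pb_dim : (pb k n).dim = n := by
  rw [pb, AdjoinRoot.powerBasis'_dim, Polynomial.natDegree_X_pow]

theorem pb_gen : (pb k n).gen = x k n := rfl

def BV : Module.Basis (Fin (pb k n).dim ⊕ Fin (pb k n).dim) k (V k n) :=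
  (pb k n).basis.prod (pb k n).basis

def splitE : (Fin n × Fin 2) ≃ (Fin (pb k n).dim ⊕ Fin (pb k n).dim) where
  toFun p := if p.2 = 0 then Sum.inl (Fin.cast (pb_dim k n).symm p.1)
    else Sum.inr (Fin.cast (pb_dim k n).symm p.1)
  invFun s := Sum.elim (fun i => (Fin.cast (pb_dim k n) i, 0))
    (fun i => (Fin.cast (pb_dim k n) i, 1)) s
  left_inv := by
    rintro ⟨i, j⟩
    fin_cases j <;> simp
  right_inv := by
    rintro (i | i) <;> simp

theorem ev_b_eq : (ev k n) ∘ (b k n) = (BV k n) ∘ (splitE k n) := by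
  funext p
  obtain ⟨i, j⟩ := p
  show ev k n (b k n (i, j)) = BV k n (splitE k n (i, j))
  rw [ev_b]
  fin_cases j
  · show ((x k n) ^ (i : ℕ), 0) = BV k n (Sum.inl (Fin.cast (pb_dim k n).symm i))
    apply Prod.ext
    · rw [BV, Module.Basis.prod_apply_inl_fst, PowerBasis.coe_basis, pb_gen]
      simp
    · rw [BV, Module.Basis.prod_apply_inl_snd]
  · show (0, (x k n) ^ (i : ℕ)) = BV k n (Sum.inr (Fin.cast (pb_dim k n).symm i))
    apply Prod.ext
    · rw [BV, Module.Basis.prod_apply_inr_fst]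
    · rw [BV, Module.Basis.prod_apply_inr_snd, PowerBasis.coe_basis, pb_gen]
      simp

theorem li : LinearIndependent k (b k n) := by
  have h1 : LinearIndependent k ((ev k n) ∘ (b k n)) := by
    rw [ev_b_eq]
    exact (BV k n).linearIndependent.comp (splitE k n) (splitE k n).injective
  exact h1.of_comp (ev k n)

abbrev spanb : Submodule k (Sn k n) := Submodule.span k (Set.range (b k n))

theorem t_pow_big {m : ℕ} (hm : n ≤ m) : (t k n) ^ m = 0 := by
  have : (t k n) ^ m = (t k n) ^ n * (t k n) ^ (m - n) := by
    rw [← pow_add, Nat.add_sub_cancel' hm]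
  rw [this, t_pow_n, zeromul]

theorem tg_mem (m : ℕ) (j : Fin 2) : (t k n) ^ m * (g k n) ^ (j : ℕ) ∈ spanb k n := by
  by_cases hm : m < n
  · exact Submodule.subset_span ⟨(⟨m, hm⟩, j), rfl⟩
  · rw [t_pow_big k n (le_of_not_gt hm), zeromul]
    exact Submodule.zero_mem _

theorem mul_mem_b (p q : Fin n × Fin 2) : b k n p * b k n q ∈ spanb k n := by
  obtain ⟨i, j⟩ := p
  obtain ⟨i', j'⟩ := q
  show (t k n ^ (i : ℕ) * g k n ^ (j : ℕ)) * (t k n ^ (i' : ℕ) * g k n ^ (j' : ℕ)) ∈ _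
  fin_cases j
  · show (t k n ^ (i : ℕ) * g k n ^ 0) * (t k n ^ (i' : ℕ) * g k n ^ (j' : ℕ)) ∈ _
    rw [pow_zero, mul_one, ← mul_assoc, ← pow_add]
    exact tg_mem k n _ j'
  · show (t k n ^ (i : ℕ) * g k n ^ 1) * (t k n ^ (i' : ℕ) * g k n ^ (j' : ℕ)) ∈ _
    rw [pow_one]
    have h1 : (t k n ^ (i : ℕ) * g k n) * (t k n ^ (i' : ℕ) * g k n ^ (j' : ℕ))
        = t k n ^ (i : ℕ) * ((g k n * t k n ^ (i' : ℕ)) * g k n ^ (j' : ℕ)) := by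
      rw [mul_assoc, ← mul_assoc (g k n)]
    rw [h1, g_t_pow, smul_mul, mul_smul',
      mul_assoc (t k n ^ (i' : ℕ)) (g k n) (g k n ^ (j' : ℕ)),
      ← mul_assoc (t k n ^ (i : ℕ)), ← pow_add]
    apply Submodule.smul_mem
    fin_cases j'
    · show t k n ^ ((i : ℕ) + (i' : ℕ)) * (g k n * g k n ^ 0) ∈ _
      rw [pow_zero, mul_one]
      have := tg_mem k n ((i : ℕ) + (i' : ℕ)) (1 : Fin 2)
      rw [show ((1 : Fin 2) : ℕ) = 1 from rfl, pow_one] at this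
      exact this
    · show t k n ^ ((i : ℕ) + (i' : ℕ)) * (g k n * g k n ^ 1) ∈ _
      rw [pow_one, g_g, mul_one]
      have := tg_mem k n ((i : ℕ) + (i' : ℕ)) (0 : Fin 2)
      rw [show ((0 : Fin 2) : ℕ) = 0 from rfl, pow_zero, mul_one] at this
      exact this

theorem one_mem_spanb (hn : 1 ≤ n) : (1 : Sn k n) ∈ spanb k n := by
  have := tg_mem k n 0 (0 : Fin 2)
  rw [show ((0 : Fin 2) : ℕ) = 0 from rfl, pow_zero, pow_zero, mul_one] at this
  exact this

theorem t_mem_spanb : t k n ∈ spanb k n := by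
  have := tg_mem k n 1 (0 : Fin 2)
  rw [show ((0 : Fin 2) : ℕ) = 0 from rfl, pow_zero, pow_one, mul_one] at this
  exact this

theorem g_mem_spanb : g k n ∈ spanb k n := by
  have := tg_mem k n 0 (1 : Fin 2)
  rw [show ((1 : Fin 2) : ℕ) = 1 from rfl, pow_zero, pow_one, one_mul] at this
  exact this

theorem adjoin_tg : Algebra.adjoin k ({t k n, g k n} : Set (Sn k n)) = ⊤ := by
  rw [eq_top_iff]
  rintro z -
  obtain ⟨w, rfl⟩ := RingQuot.mkAlgHom_surjective k (SRel k n) z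
  induction w using FreeAlgebra.induction with
  | grade0 r => exact (RingQuot.mkAlgHom k (SRel k n)).commutes r ▸ Subalgebra.algebraMap_mem _ r
  | grade1 i =>
    fin_cases i
    · exact Algebra.subset_adjoin (Set.mem_insert _ _)
    · exact Algebra.subset_adjoin (Set.mem_insert_of_mem _ rfl)
  | mul w₁ w₂ h₁ h₂ => rw [map_mul]; exact Subalgebra.mul_mem _ h₁ h₂
  | add w₁ w₂ h₁ h₂ => rw [map_add]; exact Subalgebra.add_mem _ h₁ h₂

theorem spanb_top (hn : 1 ≤ n) : spanb k n = ⊤ := by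
  have hmul : ∀ x y : Sn k n, x ∈ spanb k n → y ∈ spanb k n → x * y ∈ spanb k n := by
    intro a c ha hc
    have hle : spanb k n * spanb k n ≤ spanb k n := by
      rw [Submodule.span_mul_span]
      refine Submodule.span_le.mpr ?_
      rintro z hz
      rw [Set.mem_mul] at hz
      obtain ⟨u, hu, v, hv, rfl⟩ := hz
      obtain ⟨p, rfl⟩ := hu
      obtain ⟨q, rfl⟩ := hv
      exact mul_mem_b k n p q
    exact hle (Submodule.mul_mem_mul ha hc)
  have hSA : (⊤ : Subalgebra k (Sn k n)) ≤ (spanb k n).toSubalgebra (one_mem_spanb k n hn) hmul := by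
    rw [← adjoin_tg k n]
    apply Algebra.adjoin_le
    rintro z (rfl | rfl)
    · exact t_mem_spanb k n
    · exact g_mem_spanb k n
  have : (spanb k n).toSubalgebra (one_mem_spanb k n hn) hmul = ⊤ := top_le_iff.mp hSA
  calc spanb k n
      = Subalgebra.toSubmodule ((spanb k n).toSubalgebra (one_mem_spanb k n hn) hmul) :=
        (Submodule.toSubalgebra_toSubmodule _ _ _).symm
    _ = ⊤ := by rw [this]; rfl

def B (hn : 1 ≤ n) : Module.Basis (Fin n × Fin 2) k (Sn k n) :=
  Module.Basis.mk (li k n) (spanb_top k n hn).ge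

theorem B_apply (hn : 1 ≤ n) (p : Fin n × Fin 2) : B k n hn p = b k n p :=
  Module.Basis.mk_apply _ _ _

def lam (hn : 1 ≤ n) : Sn k n →ₗ[k] k :=
  (B k n hn).coord (⟨n - 1, by omega⟩, 0)

theorem lam_B (hn : 1 ≤ n) (p : Fin n × Fin 2) :
    lam k n hn (B k n hn p) = if p = (⟨n - 1, by omega⟩, (0 : Fin 2)) then 1 else 0 := by
  rw [lam, Module.Basis.coord_apply, Module.Basis.repr_self, Finsupp.single_apply]

theorem lam_tg (hn : 1 ≤ n) (a : ℕ) (e : Fin 2) :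
    lam k n hn (t k n ^ a * g k n ^ (e : ℕ)) = if a = n - 1 ∧ e = 0 then 1 else 0 := by
  by_cases ha : a < n
  · have h1 : t k n ^ a * g k n ^ (e : ℕ) = B k n hn (⟨a, ha⟩, e) := by
      rw [B_apply]; rfl
    rw [h1, lam_B]
    by_cases hc : a = n - 1 ∧ e = 0
    · rw [if_pos hc, if_pos]
      obtain ⟨h2, h3⟩ := hc
      exact Prod.ext (Fin.ext h2) h3
    · rw [if_neg hc, if_neg]
      intro h
      obtain ⟨h2, h3⟩ := Prod.mk.injEq .. ▸ h
      exact hc ⟨by simpa [Fin.ext_iff] using h2, h3⟩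
  · rw [t_pow_big k n (le_of_not_gt ha), zeromul, map_zero, if_neg]
    rintro ⟨h1, -⟩
    omega

theorem lam_bb (hn : 1 ≤ n) (i : Fin n) (j : Fin 2) (p : Fin n × Fin 2) :
    lam k n hn (b k n p * b k n (⟨n - 1 - (i : ℕ), by omega⟩, j))
      = if p = (i, j) then (-1 : k) ^ ((j : ℕ) * (n - 1 - (i : ℕ))) else 0 := by
  obtain ⟨i', j'⟩ := p
  have him : (i : ℕ) < n := i.isLt
  have him' : (i' : ℕ) < n := i'.isLt
  fin_cases j'
  · -- j' = 0
    show lam k n hn (t k n ^ (i' : ℕ) * g k n ^ 0 * (t k n ^ (n - 1 - (i : ℕ)) * g k n ^ (j : ℕ)))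
        = if ((i' : Fin n), (0 : Fin 2)) = (i, j) then
            (-1 : k) ^ ((j : ℕ) * (n - 1 - (i : ℕ))) else 0
    rw [pow_zero, mul_one, ← mul_assoc, ← pow_add, lam_tg]
    by_cases hc : ((i' : Fin n), (0 : Fin 2)) = (i, j)
    · have hc' := hc
      rw [Prod.mk.injEq] at hc'
      obtain ⟨h1, h2⟩ := hc'
      subst h2
      have h1' : (i' : ℕ) = (i : ℕ) := congrArg Fin.val h1
      rw [if_pos hc, if_pos ⟨by omega, rfl⟩,
        show ((0 : Fin 2) : ℕ) = 0 from rfl, zero_mul, pow_zero]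
    · rw [if_neg hc, if_neg]
      rintro ⟨h1, h2⟩
      apply hc
      have h3 : (i' : ℕ) = (i : ℕ) := by omega
      exact Prod.ext_iff.mpr ⟨Fin.ext h3, h2.symm⟩
  · -- j' = 1
    show lam k n hn (t k n ^ (i' : ℕ) * g k n ^ 1 * (t k n ^ (n - 1 - (i : ℕ)) * g k n ^ (j : ℕ)))
        = if ((i' : Fin n), (1 : Fin 2)) = (i, j) then
            (-1 : k) ^ ((j : ℕ) * (n - 1 - (i : ℕ))) else 0
    rw [pow_one]
    set m : ℕ := n - 1 - (i : ℕ) with hmdef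
    have h1 : (t k n ^ (i' : ℕ) * g k n) * (t k n ^ m * g k n ^ (j : ℕ))
        = t k n ^ (i' : ℕ) * ((g k n * t k n ^ m) * g k n ^ (j : ℕ)) := by
      rw [mul_assoc, ← mul_assoc (g k n)]
    rw [h1, g_t_pow, smul_mul, mul_smul',
      mul_assoc (t k n ^ m) (g k n) (g k n ^ (j : ℕ)),
      ← mul_assoc (t k n ^ (i' : ℕ)), ← pow_add, map_smul, smul_eq_mul]
    fin_cases j
    · -- j = 0
      show (-1 : k) ^ m * lam k n hn (t k n ^ ((i' : ℕ) + m) * (g k n * g k n ^ 0))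
          = if ((i' : Fin n), (1 : Fin 2)) = (i, (0 : Fin 2)) then
              (-1 : k) ^ (((0 : Fin 2) : ℕ) * m) else 0
      rw [pow_zero, mul_one]
      have h2 : g k n = g k n ^ ((1 : Fin 2) : ℕ) := by
        rw [show ((1 : Fin 2) : ℕ) = 1 from rfl, pow_one]
      rw [h2, lam_tg, if_neg (by rintro ⟨-, h⟩; exact absurd h (by decide)), mul_zero,
        if_neg (by rintro h; rw [Prod.mk.injEq] at h; exact absurd h.2 (by decide))]
    · -- j = 1
      show (-1 : k) ^ m * lam k n hn (t k n ^ ((i' : ℕ) + m) * (g k n * g k n ^ 1))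
          = if ((i' : Fin n), (1 : Fin 2)) = (i, (1 : Fin 2)) then
              (-1 : k) ^ (((1 : Fin 2) : ℕ) * m) else 0
      rw [pow_one, g_g]
      have h2 : t k n ^ ((i' : ℕ) + m) * (1 : Sn k n)
          = t k n ^ ((i' : ℕ) + m) * g k n ^ ((0 : Fin 2) : ℕ) := by
        rw [show ((0 : Fin 2) : ℕ) = 0 from rfl, pow_zero]
      rw [h2, lam_tg]
      rw [show (((1 : Fin 2) : ℕ) * m) = m from one_mul m]
      by_cases hc : ((i' : Fin n), (1 : Fin 2)) = (i, (1 : Fin 2))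
      · have hc' := hc
        rw [Prod.mk.injEq] at hc'
        have hc1 : (i' : ℕ) = (i : ℕ) := congrArg Fin.val hc'.1
        rw [if_pos ⟨by omega, rfl⟩, if_pos hc, mul_one]
      · rw [if_neg, if_neg hc, mul_zero]
        rintro ⟨hc1, -⟩
        apply hc
        have h3 : (i' : ℕ) = (i : ℕ) := by omega
        exact Prod.ext_iff.mpr ⟨Fin.ext h3, rfl⟩

theorem nondeg (hn : 1 ≤ n) (r : Sn k n) (hr : ∀ s : Sn k n, lam k n hn (r * s) = 0) :
    r = 0 := by
  have hrepr : ∀ p : Fin n × Fin 2, (B k n hn).repr r p = 0 := by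
    rintro ⟨i, j⟩
    set q : Fin n × Fin 2 := (⟨n - 1 - (i : ℕ), by omega⟩, j) with hq
    set L : Sn k n →ₗ[k] k := (lam k n hn) ∘ₗ (LinearMap.mulRight k (b k n q)) with hLdef
    have hL : ∀ z : Sn k n, L z = lam k n hn (z * b k n q) := fun z => rfl
    have h2 : L r = ∑ p : Fin n × Fin 2, (B k n hn).repr r p • L (B k n hn p) := by
      conv_lhs => rw [← Module.Basis.sum_repr (B k n hn) r]
      rw [map_sum]
      refine Finset.sum_congr rfl fun p _ => ?_
      rw [map_smul]
    have h3 : ∀ p : Fin n × Fin 2, L (B k n hn p)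
        = if p = (i, j) then (-1 : k) ^ ((j : ℕ) * (n - 1 - (i : ℕ))) else 0 := by
      intro p
      rw [hL, B_apply]
      exact lam_bb k n hn i j p
    have h4 : L r = (B k n hn).repr r (i, j) * (-1 : k) ^ ((j : ℕ) * (n - 1 - (i : ℕ))) := by
      rw [h2]
      have : ∀ p : Fin n × Fin 2, (B k n hn).repr r p • L (B k n hn p)
          = if p = (i, j) then (B k n hn).repr r p * (-1 : k) ^ ((j : ℕ) * (n - 1 - (i : ℕ)))
            else 0 := by
        intro p
        rw [h3, smul_eq_mul]
        by_cases hp : p = (i, j)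
        · rw [if_pos hp, if_pos hp]
        · rw [if_neg hp, if_neg hp, mul_zero]
      rw [Finset.sum_congr rfl fun p _ => this p, Finset.sum_ite_eq' Finset.univ (i, j)]
      rw [if_pos (Finset.mem_univ _)]
    have h5 : L r = 0 := by rw [hL]; exact hr _
    have h6 : (-1 : k) ^ ((j : ℕ) * (n - 1 - (i : ℕ))) ≠ 0 :=
      pow_ne_zero _ (neg_ne_zero.mpr one_ne_zero)
    have := h4.symm.trans h5
    exact (mul_eq_zero.mp this).resolve_right h6
  have : (B k n hn).repr r = 0 := Finsupp.ext hrepr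
  exact ((B k n hn).repr.map_eq_zero_iff).mp this

end SnAux2

/-- `S_n` is self-injective, i.e. `S_n` is injective as a right module
over itself (a right module is a module over the opposite ring). -/
theorem stmt6 (k : Type) [Field k] (hk : ringChar k ≠ 2) (n : ℕ) (hn : 1 ≤ n) :
    Module.Injective (Sn k n)ᵐᵒᵖ (Sn k n) := by
  haveI : FiniteDimensional k (Sn k n) := Module.Finite.of_basis (SnAux2.B k n hn)
  exact frobenius_selfinjective (SnAux2.lam k n hn) (SnAux2.nondeg k n hn)
end
end

section
/- Let n ≥ 1 and let I_0 be a subset of [n] with the property that every i ∈ I_0 \ Φ(I_0) satisfies 2i ≥ n+1; set J_0 := Φ(I_0). Then the number of nonempty initial segments K of I_0 satisfying K ≤ J_0 is equal to |I_0 ∩ J_0|. -/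
/-- The elements of a finite set of naturals, listed in decreasing order. -/
def descList (V : Finset ℕ) : List ℕ := (V.sort (· ≤ ·)).reverse

/-- The order `V ≤ W` on subsets of `[n]`: writing `V = {v_1 > … > v_x}` and
`W = {w_1 > … > w_y}` in decreasing order, `V ≤ W` iff `x ≤ y` and `v_l ≤ w_l`
for all `1 ≤ l ≤ x`. -/
def SetLE (V W : Finset ℕ) : Prop :=
  V.card ≤ W.card ∧ ∀ l < V.card, (descList V).getD l 0 ≤ (descList W).getD l 0

/-- `K` is a nonempty initial segment of `I` (the `u` smallest elements of `I`
for some `u ≥ 1`): `K` is a nonempty subset of `I` which is downward closed in `I`. -/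
def IsInitSeg (K I : Finset ℕ) : Prop :=
  K.Nonempty ∧ K ⊆ I ∧ ∀ i ∈ I, ∀ j ∈ K, i ≤ j → i ∈ K

/-- `Φ(I) = {n+1-i : i ∈ I}`. -/
def Phi (n : ℕ) (I : Finset ℕ) : Finset ℕ := I.image (fun i => n + 1 - i)

namespace Stmt9

/-! ### The `m`-th smallest element of a finset -/

/-- The `m`-th smallest element of `A` (0-indexed). -/
def nth (A : Finset ℕ) (m : ℕ) : ℕ := (A.sort (· ≤ ·)).getD m 0

lemma nth_eq_getElem (A : Finset ℕ) {m : ℕ} (hm : m < A.card) :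
    nth A m = (A.sort (· ≤ ·))[m]'(by rwa [Finset.length_sort]) := by
  exact List.getD_eq_getElem _ _ _

lemma nth_mem (A : Finset ℕ) {m : ℕ} (hm : m < A.card) : nth A m ∈ A := by
  rw [nth_eq_getElem A hm]
  exact (Finset.mem_sort _).mp (List.getElem_mem _)

lemma nth_lt_nth (A : Finset ℕ) {m m' : ℕ} (h : m < m') (hm' : m' < A.card) :
    nth A m < nth A m' := by
  rw [nth_eq_getElem A (h.trans hm'), nth_eq_getElem A hm']
  exact (Finset.sortedLT_sort A).pairwise.rel_get_of_lt (a := ⟨m, by rw [Finset.length_sort]; exact h.trans hm'⟩)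
    (b := ⟨m', by rwa [Finset.length_sort]⟩) h

lemma nth_le_nth (A : Finset ℕ) {m m' : ℕ} (h : m ≤ m') (hm' : m' < A.card) :
    nth A m ≤ nth A m' := by
  rcases h.lt_or_eq with h | h
  · exact (nth_lt_nth A h hm').le
  · rw [h]

lemma exists_nth (A : Finset ℕ) {a : ℕ} (ha : a ∈ A) : ∃ m, m < A.card ∧ nth A m = a := by
  have : a ∈ A.sort (· ≤ ·) := (Finset.mem_sort _).mpr ha
  obtain ⟨k, hk, hk2⟩ := List.getElem_of_mem this
  exact ⟨k, by rwa [Finset.length_sort] at hk,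
    by rw [nth_eq_getElem A (by rwa [Finset.length_sort] at hk)]; exact hk2⟩

/-- the filter of small elements equals the first `m+1` elements -/
lemma filter_le_nth (A : Finset ℕ) {m : ℕ} (hm : m < A.card) :
    A.filter (· ≤ nth A m) = ((A.sort (· ≤ ·)).take (m+1)).toFinset := by
  ext x
  simp only [Finset.mem_filter, List.mem_toFinset]
  constructor
  · rintro ⟨hx, hxle⟩
    obtain ⟨k, hk, rfl⟩ := exists_nth A hx
    have hkm : k ≤ m := by
      by_contra hkm
      exact absurd hxle (nth_lt_nth A (by omega) hk).not_ge
    have hk' : k < ((A.sort (· ≤ ·)).take (m+1)).length := by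
      rw [List.length_take, Finset.length_sort]; omega
    have : ((A.sort (· ≤ ·)).take (m+1))[k] = nth A k := by
      rw [List.getElem_take, nth_eq_getElem A hk]
    rw [← this]
    exact List.getElem_mem hk'
  · intro hx
    obtain ⟨k, hk, hk2⟩ := List.getElem_of_mem hx
    have hk' : k < A.card := by rw [List.length_take, Finset.length_sort] at hk; omega
    have hkx : x = nth A k := by rw [nth_eq_getElem A hk', ← hk2, List.getElem_take]
    refine ⟨by rw [hkx]; exact nth_mem A hk', ?_⟩
    rw [hkx]
    exact nth_le_nth A (by rw [List.length_take, Finset.length_sort] at hk; omega) hm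

lemma card_filter_le_nth (A : Finset ℕ) {m : ℕ} (hm : m < A.card) :
    (A.filter (· ≤ nth A m)).card = m + 1 := by
  rw [filter_le_nth A hm,
    List.toFinset_card_of_nodup ((A.sort_nodup _).sublist (List.take_sublist _ _)),
    List.length_take, Finset.length_sort]
  omega

lemma nth_le_of_card_filter (A : Finset ℕ) {m p : ℕ} (hm : m < A.card)
    (h : m + 1 ≤ (A.filter (· ≤ p)).card) : nth A m ≤ p := by
  by_contra hc
  push_neg at hc
  have hsub : A.filter (· ≤ p) ⊆ A.filter (· ≤ nth A m) := by
    intro x hx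
    simp only [Finset.mem_filter] at hx ⊢
    exact ⟨hx.1, hx.2.trans hc.le⟩
  have hne : nth A m ∉ A.filter (· ≤ p) := by
    simp only [Finset.mem_filter]
    rintro ⟨-, h2⟩; omega
  have hsub2 : A.filter (· ≤ p) ⊆ (A.filter (· ≤ nth A m)).erase (nth A m) := fun x hx =>
    Finset.mem_erase.mpr ⟨fun he => hne (he ▸ hx), hsub hx⟩
  have h4 := Finset.card_le_card hsub2
  have hmem : nth A m ∈ A.filter (· ≤ nth A m) := Finset.mem_filter.mpr ⟨nth_mem A hm, le_refl _⟩
  rw [Finset.card_erase_of_mem hmem, card_filter_le_nth A hm] at h4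
  omega

/-! ### Basic facts about `Phi` -/

variable {n : ℕ}

lemma mem_phi {A : Finset ℕ} (hA : A ⊆ Finset.Icc 1 n) {i : ℕ} :
    i ∈ Phi n A ↔ 1 ≤ i ∧ i ≤ n ∧ n + 1 - i ∈ A := by
  simp only [Phi, Finset.mem_image]
  constructor
  · rintro ⟨x, hx, rfl⟩
    have := Finset.mem_Icc.mp (hA hx)
    refine ⟨by omega, by omega, ?_⟩
    have h : n + 1 - (n + 1 - x) = x := by omega
    rwa [h]
  · rintro ⟨h1, h2, h3⟩
    exact ⟨n + 1 - i, h3, by omega⟩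

lemma phi_subset {A : Finset ℕ} (hA : A ⊆ Finset.Icc 1 n) : Phi n A ⊆ Finset.Icc 1 n := by
  intro i hi
  rw [mem_phi hA] at hi
  exact Finset.mem_Icc.mpr ⟨hi.1, hi.2.1⟩

lemma card_phi {A : Finset ℕ} (hA : A ⊆ Finset.Icc 1 n) : (Phi n A).card = A.card := by
  refine Finset.card_image_of_injOn (fun x hx y hy hxy => ?_)
  have hx' := Finset.mem_Icc.mp (hA hx)
  have hy' := Finset.mem_Icc.mp (hA hy)
  omega

/-- The sorted list of `Phi n A` is the reversal of the image of the sorted list of `A`. -/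
lemma sort_phi {A : Finset ℕ} (hA : A ⊆ Finset.Icc 1 n) :
    (Phi n A).sort (· ≤ ·) = ((A.sort (· ≤ ·)).map (fun i => n + 1 - i)).reverse := by
  have hmem : ∀ x ∈ A.sort (· ≤ ·), 1 ≤ x ∧ x ≤ n := by
    intro x hx
    exact Finset.mem_Icc.mp (hA ((Finset.mem_sort _).mp hx))
  have hnd : ((A.sort (· ≤ ·)).map (fun i => n + 1 - i)).reverse.Nodup := by
    rw [List.nodup_reverse]
    refine (A.sort_nodup _).map_on (fun x hx y hy hxy => ?_)
    have := hmem x hx; have := hmem y hy; omega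
  have hsor : ((A.sort (· ≤ ·)).map (fun i => n + 1 - i)).reverse.Pairwise (· < ·) := by
    rw [List.pairwise_reverse, List.pairwise_map]
    refine ((Finset.sortedLT_sort A).pairwise).imp_of_mem (fun {a b} ha hb hab => ?_)
    have := hmem a ha; have := hmem b hb; omega
  refine List.Perm.eq_of_pairwise (fun a b _ _ h1 h2 => absurd (h1.trans h2) (lt_irrefl a))
    (Finset.sortedLT_sort _).pairwise hsor
    (List.perm_of_nodup_nodup_toFinset_eq (Finset.sort_nodup _ _) hnd ?_)
  rw [Finset.sort_toFinset, List.toFinset_reverse]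
  ext x
  simp only [List.mem_toFinset, List.mem_map, Finset.mem_sort, Phi, Finset.mem_image]

lemma nth_phi {A : Finset ℕ} (hA : A ⊆ Finset.Icc 1 n) {m : ℕ} (hm : m < A.card) :
    nth (Phi n A) m = n + 1 - nth A (A.card - 1 - m) := by
  have hm' : m < (Phi n A).card := by rwa [card_phi hA]
  rw [nth_eq_getElem _ hm']
  have h1 : m < ((A.sort (· ≤ ·)).map (fun i => n + 1 - i)).reverse.length := by
    simp [Finset.length_sort, hm]
  have h2 : ((Phi n A).sort (· ≤ ·))[m]'(by rwa [Finset.length_sort]) =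
      ((A.sort (· ≤ ·)).map (fun i => n + 1 - i)).reverse[m]'h1 := by
    congr 1
    exact sort_phi hA
  rw [h2, List.getElem_reverse, List.getElem_map, ← nth_eq_getElem]
  · simp [Finset.length_sort]
  · rw [List.length_map, Finset.length_sort]; omega

lemma getD_descList (A : Finset ℕ) {l : ℕ} (hl : l < A.card) :
    (descList A).getD l 0 = nth A (A.card - 1 - l) := by
  have h1 : l < ((A.sort (· ≤ ·)).reverse).length := by
    rw [List.length_reverse, Finset.length_sort]; exact hl
  have h2 : A.card - 1 - l < A.card := by omega
  show ((A.sort (· ≤ ·)).reverse).getD l 0 = _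
  rw [List.getD_eq_getElem _ _ h1, List.getElem_reverse, nth_eq_getElem A h2]
  simp only [Finset.length_sort]

/-- A sorted nodup list sorts back to itself. -/
lemma sort_toFinset_of_sorted {l : List ℕ} (hl : l.Pairwise (· < ·)) :
    l.toFinset.sort (· ≤ ·) = l := by
  refine List.Perm.eq_of_pairwise (fun a b _ _ h1 h2 => absurd (h1.trans h2) (lt_irrefl a))
    (Finset.sortedLT_sort _).pairwise hl
    (List.perm_of_nodup_nodup_toFinset_eq (Finset.sort_nodup _ _) hl.nodup ?_)
  rw [Finset.sort_toFinset]

end Stmt9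

open Stmt9

/-- if `I₀ ⊆ [n]` satisfies that every `i ∈ I₀ \ Φ(I₀)` has
`2i ≥ n+1`, and `J₀ = Φ(I₀)`, then the number of nonempty initial segments `K`
of `I₀` with `K ≤ J₀` equals `|I₀ ∩ J₀|`. -/
theorem stmt9 (n : ℕ) (hn : 1 ≤ n) (I₀ : Finset ℕ) (hI : I₀ ⊆ Finset.Icc 1 n)
    (hcond : ∀ i ∈ I₀, i ∉ Phi n I₀ → n + 1 ≤ 2 * i) :
    {K : Finset ℕ | IsInitSeg K I₀ ∧ SetLE K (Phi n I₀)}.ncard =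
      (I₀ ∩ Phi n I₀).card := by
  set J : Finset ℕ := Phi n I₀ with hJ
  set P : Finset ℕ := I₀ ∩ J with hP
  set r : ℕ := I₀.card with hr
  set s : ℕ := P.card with hs
  set d : ℕ → ℕ := nth I₀ with hd
  set p : ℕ → ℕ := nth P with hp
  have hPsubI : P ⊆ I₀ := Finset.inter_subset_left
  have hPsub : P ⊆ Finset.Icc 1 n := hPsubI.trans hI
  have hsr : s ≤ r := Finset.card_le_card hPsubI
  have hJcard : J.card = r := card_phi hI
  -- `P` is `Phi`-invariant
  have hphiP : Phi n P = P := by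
    have hsub : Phi n P ⊆ P := by
      intro i hi
      rw [mem_phi hPsub] at hi
      obtain ⟨h1, h2, h3⟩ := hi
      have h3' := Finset.mem_inter.mp h3
      have h4 : n + 1 - i ∈ I₀ := h3'.1
      have h5 : n + 1 - (n + 1 - i) = i := by omega
      refine Finset.mem_inter.mpr ⟨?_, ?_⟩
      · rw [hJ, mem_phi hI] at h3'
        have h6 := h3'.2.2.2
        rwa [h5] at h6
      · rw [hJ, mem_phi hI]
        exact ⟨h1, h2, h4⟩
    exact Finset.eq_of_subset_of_card_le hsub (card_phi hPsub).ge
  -- pairing inside `P`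
  have hpair : ∀ l < s, p l + p (s - 1 - l) = n + 1 := by
    intro l hl
    have h2 : p (s - 1 - l) ≤ n := by
      have := Finset.mem_Icc.mp (hPsub (nth_mem P (show s - 1 - l < P.card by omega)))
      exact this.2
    have h1 : p l = n + 1 - p (s - 1 - l) := by
      rw [hp, hs]
      have h3 := nth_phi hPsub (show l < P.card by omega)
      rwa [hphiP] at h3
    omega
  -- elements of `I₀` outside `P` are large
  have hbig : ∀ i ∈ I₀, i ∉ P → n + 2 ≤ 2 * i := by
    intro i hi hiP
    have hiJ : i ∉ J := fun h => hiP (Finset.mem_inter.mpr ⟨hi, h⟩)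
    have h1 := hcond i hi hiJ
    rcases Nat.lt_or_ge (n + 1) (2 * i) with h | h
    · omega
    · exfalso
      apply hiJ
      rw [hJ, mem_phi hI]
      have := Finset.mem_Icc.mp (hI hi)
      have h5 : n + 1 - i = i := by omega
      exact ⟨by omega, by omega, by rw [h5]; exact hi⟩
  -- `d m ≤ p m` for `m < s`
  have hdlep : ∀ m < s, d m ≤ p m := by
    intro m hm
    refine nth_le_of_card_filter I₀ (by omega) ?_
    have h1 : (P.filter (· ≤ p m)).card = m + 1 := card_filter_le_nth P (by omega)
    have h2 : (P.filter (· ≤ p m)).card ≤ (I₀.filter (· ≤ p m)).card :=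
      Finset.card_le_card (Finset.filter_subset_filter _ hPsubI)
    omega
  -- monotonicity of the validity condition
  have hmono : ∀ u u' : ℕ, u' ≤ u → u ≤ r → (∀ m < u, d m + d (u - 1 - m) ≤ n + 1) →
      ∀ m < u', d m + d (u' - 1 - m) ≤ n + 1 := by
    intro u u' hle hur hu m hm
    have h1 := hu m (by omega)
    have h2 : d (u' - 1 - m) ≤ d (u - 1 - m) := nth_le_nth I₀ (by omega) (by omega)
    omega
  -- validity at `s`
  have hvalid_s : ∀ m < s, d m + d (s - 1 - m) ≤ n + 1 := by
    intro m hm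
    have h1 := hdlep m hm
    have h2 := hdlep (s - 1 - m) (by omega)
    have h3 := hpair m hm
    omega
  -- failure of validity at `s + 1`
  have hnotvalid : s < r → ¬ (∀ m < s + 1, d m + d (s - m) ≤ n + 1) := by
    intro hsr' hval
    have hdP : ∀ m, 2 * m ≤ s → d m ∈ P := by
      intro m hm
      have h1 := hval m (by omega)
      have h2 : d m ≤ d (s - m) := nth_le_nth I₀ (by omega) (by omega)
      by_contra hc
      have := hbig (d m) (nth_mem I₀ (by omega)) hc
      omega
    have hdp_eq : ∀ m, 2 * m ≤ s → m < s → d m = p m := by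
      intro m hm hms
      refine le_antisymm (hdlep m hms) ?_
      refine nth_le_of_card_filter P (by omega) ?_
      have hsub : I₀.filter (· ≤ d m) ⊆ P.filter (· ≤ d m) := by
        intro x hx
        rw [Finset.mem_filter] at hx ⊢
        obtain ⟨k, hk, rfl⟩ := exists_nth I₀ hx.1
        have hkm : k ≤ m := by
          by_contra hkm
          exact absurd hx.2 (nth_lt_nth I₀ (show m < k by omega) hk).not_ge
        exact ⟨hdP k (by omega), hx.2⟩
      have h4 := Finset.card_le_card hsub
      have h5 : (I₀.filter (· ≤ d m)).card = m + 1 := card_filter_le_nth I₀ (by omega)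
      omega
    rcases Nat.eq_zero_or_pos s with h0 | hpos
    · have h01 := hdP 0 (by omega)
      have hPe : P = ∅ := Finset.card_eq_zero.mp (by omega)
      rw [hPe] at h01
      exact absurd h01 (Finset.notMem_empty _)
    · rcases Nat.even_or_odd s with ⟨t, ht⟩ | ⟨t, ht⟩
      · have ht1 : 1 ≤ t := by omega
        have h1 := hval t (by omega)
        have h2 : d t = p t := hdp_eq t (by omega) (by omega)
        have h3 := hpair t (by omega)
        have h4 : p (t - 1) < p t := nth_lt_nth P (by omega) (by omega)
        have h5 : s - t = t := by omega
        have h6 : s - 1 - t = t - 1 := by omega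
        rw [h5] at h1; rw [h6] at h3
        omega
      · have h1 := hval t (by omega)
        have h2 : d t = p t := hdp_eq t (by omega) (by omega)
        have h3 := hpair t (by omega)
        have h4 : d t < d (t + 1) := nth_lt_nth I₀ (by omega) (by omega)
        have h5 : s - t = t + 1 := by omega
        have h6 : s - 1 - t = t := by omega
        rw [h5] at h1; rw [h6] at h3
        omega
  -- characterization of initial segments
  have hKset : ∀ K : Finset ℕ, IsInitSeg K I₀ ↔ ∃ j ∈ I₀, K = I₀.filter (· ≤ j) := by
    intro K
    constructor
    · rintro ⟨hne, hsub, hdc⟩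
      refine ⟨K.max' hne, hsub (K.max'_mem hne), ?_⟩
      ext x
      simp only [Finset.mem_filter]
      constructor
      · intro hx
        exact ⟨hsub hx, K.le_max' x hx⟩
      · rintro ⟨hx1, hx2⟩
        exact hdc x hx1 _ (K.max'_mem hne) hx2
    · rintro ⟨j, hj, rfl⟩
      refine ⟨⟨j, Finset.mem_filter.mpr ⟨hj, le_refl j⟩⟩, Finset.filter_subset _ _, ?_⟩
      intro i hi k hk hik
      rw [Finset.mem_filter] at hk ⊢
      exact ⟨hi, hik.trans hk.2⟩
  -- sort of an initial segment is a prefix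
  have hsortK : ∀ m < r, (I₀.filter (· ≤ d m)).sort (· ≤ ·) = (I₀.sort (· ≤ ·)).take (m + 1) := by
    intro m hm
    have he : I₀.filter (· ≤ d m) = ((I₀.sort (· ≤ ·)).take (m + 1)).toFinset :=
      filter_le_nth I₀ (by omega)
    rw [he]
    exact sort_toFinset_of_sorted ((Finset.sortedLT_sort I₀).pairwise.sublist (List.take_sublist _ _))
  have hcardK : ∀ m < r, (I₀.filter (· ≤ d m)).card = m + 1 := by
    intro m hm
    exact card_filter_le_nth I₀ (by omega)
  have hnthK : ∀ m < r, ∀ i < m + 1, nth (I₀.filter (· ≤ d m)) i = d i := by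
    intro m hm i hi
    have h1 : nth (I₀.filter (· ≤ d m)) i = ((I₀.sort (· ≤ ·)).take (m + 1)).getD i 0 := by
      rw [nth, hsortK m hm]
    rw [h1]
    have h2 : i < ((I₀.sort (· ≤ ·)).take (m + 1)).length := by
      rw [List.length_take, Finset.length_sort]; omega
    rw [List.getD_eq_getElem _ _ h2, List.getElem_take, ← nth_eq_getElem I₀ (by omega)]
  -- the SetLE criterion
  have hSetLE : ∀ m < r, (SetLE (I₀.filter (· ≤ d m)) J ↔ ∀ l < m + 1, d l + d (m - l) ≤ n + 1) := by
    intro m hm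
    have hKc := hcardK m hm
    constructor
    · rintro ⟨-, h2⟩ l hl
      have h3 := h2 (m - l) (by omega)
      rw [getD_descList _ (by omega), getD_descList _ (by omega), hKc] at h3
      have h4 : m + 1 - 1 - (m - l) = l := by omega
      rw [h4, hnthK m hm l (by omega)] at h3
      rw [hJcard, nth_phi hI (show r - 1 - (m - l) < I₀.card by omega)] at h3
      have h5 : I₀.card - 1 - (r - 1 - (m - l)) = m - l := by omega
      rw [h5] at h3
      have h6 : d (m - l) ≤ n := (Finset.mem_Icc.mp (hI (nth_mem I₀ (show m - l < I₀.card by omega)))).2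
      rw [← hd] at h3
      omega
    · intro h
      refine ⟨by omega, fun l hl => ?_⟩
      rw [hKc] at hl
      rw [getD_descList _ (by omega), getD_descList _ (by omega), hKc]
      have h4 : m + 1 - 1 - l = m - l := by omega
      rw [h4, hnthK m hm (m - l) (by omega)]
      rw [hJcard, nth_phi hI (show r - 1 - l < I₀.card by omega)]
      have h5 : I₀.card - 1 - (r - 1 - l) = l := by omega
      rw [h5]
      have h6 := h (m - l) (by omega)
      have h7 : m - (m - l) = l := by omega
      rw [h7] at h6
      have h8 : d l ≤ n := (Finset.mem_Icc.mp (hI (nth_mem I₀ (show l < I₀.card by omega)))).2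
      rw [← hd]
      omega
  -- the key equivalence
  have hKey : ∀ m < r, (SetLE (I₀.filter (· ≤ d m)) J ↔ m < s) := by
    intro m hm
    rw [hSetLE m hm]
    constructor
    · intro h
      by_contra hc
      push_neg at hc
      have hsr' : s < r := by omega
      refine hnotvalid hsr' (fun k hk => ?_)
      have hval2 : ∀ l < m + 1, d l + d (m + 1 - 1 - l) ≤ n + 1 := by
        intro l hl
        have h10 := h l hl
        have h9 : m + 1 - 1 - l = m - l := by omega
        rwa [h9]
      have := hmono (m + 1) (s + 1) (by omega) (by omega) hval2 k hk
      have h9 : s + 1 - 1 - k = s - k := by omega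
      rwa [h9] at this
    · intro hmlt l hl
      have := hmono s (m + 1) (by omega) (by omega) hvalid_s l hl
      have h9 : m + 1 - 1 - l = m - l := by omega
      rwa [h9] at this
  -- rewrite the set as the image of a finset
  have hset : {K : Finset ℕ | IsInitSeg K I₀ ∧ SetLE K J} =
      ↑((Finset.range s).image (fun m => I₀.filter (· ≤ d m))) := by
    ext K
    simp only [Set.mem_setOf_eq, Finset.coe_image, Set.mem_image, Finset.mem_coe,
      Finset.mem_range]
    constructor
    · rintro ⟨hseg, hle⟩
      obtain ⟨j, hj, rfl⟩ := (hKset _).mp hseg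
      obtain ⟨m, hm, rfl⟩ := exists_nth I₀ hj
      exact ⟨m, (hKey m hm).mp hle, rfl⟩
    · rintro ⟨m, hm, rfl⟩
      have hmr : m < r := by omega
      exact ⟨(hKset _).mpr ⟨d m, nth_mem I₀ hmr, rfl⟩, (hKey m hmr).mpr hm⟩
  rw [hset, Set.ncard_coe_finset]
  have hinj : Set.InjOn (fun m => I₀.filter (· ≤ d m)) (Finset.range s) := by
    intro a ha b hb hab
    have ha' : a < r := by have := Finset.mem_range.mp ha; omega
    have hb' : b < r := by have := Finset.mem_range.mp hb; omega
    have h1 := hcardK a ha'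
    have h2 := hcardK b hb'
    have h3 := congrArg Finset.card hab
    simp only at h3
    omega
  rw [Finset.card_image_of_injOn hinj, Finset.card_range]
end

section
/- Let n ≥ 1 and let I_0 be a subset of [n] with the property that every i ∈ I_0 \ Φ(I_0) satisfies 2i ≥ n+1; set J_0 := Φ(I_0), and write I_0 = {i_1 > i_2 > … > i_r} and J_0 = {j_1 > j_2 > … > j_r} in decreasing order (note |I_0| = |J_0| = r). Then j_s ≤ i_s for all 1 ≤ s ≤ r; consequently every nonempty initial segment K of J_0 satisfies K ≤ I_0. -/
lemma descList_length (V : Finset ℕ) : (descList V).length = V.card := by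
  simp [descList]

lemma descList_sorted (V : Finset ℕ) : (descList V).Pairwise (· > ·) := by
  have := V.sortedLT_sort.pairwise
  simpa [descList, List.Pairwise] using (List.pairwise_reverse.mpr (by simpa using this))

lemma descList_mem {V : Finset ℕ} {x : ℕ} : x ∈ descList V ↔ x ∈ V := by
  simp [descList]

lemma descList_countP (V : Finset ℕ) (p : ℕ → Prop) [DecidablePred p] :
    (descList V).countP (fun x => decide (p x)) = (V.filter p).card := by
  have h1 : List.Perm (descList V) V.toList :=
    (List.reverse_perm _).trans (Finset.sort_perm_toList _ _)
  rw [h1.countP_eq]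
  have : (V.filter p).card = Multiset.countP (fun x => decide (p x)) V.val := by
    simp [Finset.card, Finset.filter, Multiset.countP_eq_card_filter]
  rw [this, Finset.toList]
  conv_rhs => rw [← Multiset.coe_toList V.val]
  rw [Multiset.coe_countP]
  simp

lemma descList_key (V : Finset ℕ) {s : ℕ} (hs : s < V.card) :
    (V.filter (fun x => (descList V).getD s 0 ≤ x)).card = s + 1 := by
  set L := descList V with hL
  have hlen : s < L.length := by rw [hL, descList_length]; exact hs
  have ha : L.getD s 0 = L[s] := List.getD_eq_getElem L 0 hlen
  have hsort := descList_sorted V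
  rw [← hL] at hsort
  have hpw := List.pairwise_iff_getElem.mp hsort
  rw [← descList_countP, ← hL, ha]
  have hC : List.countP (fun x => decide (L[s] ≤ x)) (L.take (s+1) ++ L.drop (s+1)) =
      List.countP (fun x => decide (L[s] ≤ x)) L := by rw [List.take_append_drop]
  rw [← hC, List.countP_append]
  have h1 : (L.take (s+1)).countP (fun x => decide (L[s] ≤ x)) = s + 1 := by
    rw [List.countP_eq_length.mpr, List.length_take]
    · omega
    · intro x hx
      obtain ⟨i, hi, rfl⟩ := List.mem_iff_getElem.mp hx
      rw [List.getElem_take]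
      simp only [decide_eq_true_eq]
      rw [List.length_take] at hi
      rcases Nat.lt_or_ge i s with h | h
      · exact le_of_lt (hpw i s (by omega) hlen h)
      · have : i = s := by omega
        subst this; exact le_refl _
  have h2 : (L.drop (s+1)).countP (fun x => decide (L[s] ≤ x)) = 0 := by
    rw [List.countP_eq_zero]
    intro x hx
    obtain ⟨i, hi, rfl⟩ := List.mem_iff_getElem.mp hx
    rw [List.getElem_drop]
    simp only [decide_eq_true_eq, not_le]
    exact hpw s (s+1+i) hlen (by rw [List.length_drop] at hi; omega) (by omega)
  omega

lemma descList_mem' (V : Finset ℕ) {s : ℕ} (hs : s < V.card) :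
    (descList V).getD s 0 ∈ V := by
  have hlen : s < (descList V).length := by rw [descList_length]; exact hs
  rw [List.getD_eq_getElem _ 0 hlen, ← descList_mem]
  exact List.getElem_mem hlen

lemma descList_ge (V : Finset ℕ) {s k : ℕ} (hs : s < V.card)
    (hk : s + 1 ≤ (V.filter (fun x => k ≤ x)).card) : k ≤ (descList V).getD s 0 := by
  by_contra h
  push_neg at h
  have hsub : V.filter (fun x => k ≤ x) ⊆ (V.filter (fun x => (descList V).getD s 0 ≤ x)).erase ((descList V).getD s 0) := by
    intro x hx
    rw [Finset.mem_filter] at hx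
    rw [Finset.mem_erase, Finset.mem_filter]
    refine ⟨by omega, hx.1, by omega⟩
  have := Finset.card_le_card hsub
  rw [Finset.card_erase_of_mem (by rw [Finset.mem_filter]; exact ⟨descList_mem' V hs, le_refl _⟩), descList_key V hs] at this
  omega

lemma descList_mono {K W : Finset ℕ} (hKW : K ⊆ W) {l : ℕ} (hl : l < K.card) :
    (descList K).getD l 0 ≤ (descList W).getD l 0 := by
  apply descList_ge W (lt_of_lt_of_le hl (Finset.card_le_card hKW))
  rw [← descList_key K hl]
  apply Finset.card_le_card
  intro x hx
  rw [Finset.mem_filter] at hx ⊢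
  exact ⟨hKW hx.1, hx.2⟩

lemma phi_subset {n : ℕ} {I : Finset ℕ} (hI : I ⊆ Finset.Icc 1 n) :
    Phi n I ⊆ Finset.Icc 1 n := by
  intro x hx
  rw [Phi, Finset.mem_image] at hx
  obtain ⟨i, hi, rfl⟩ := hx
  have := hI hi
  rw [Finset.mem_Icc] at this ⊢
  omega

lemma phi_inv {n : ℕ} {I : Finset ℕ} (hI : I ⊆ Finset.Icc 1 n) {j : ℕ}
    (hj : j ∈ Phi n I) : n + 1 - j ∈ I := by
  rw [Phi, Finset.mem_image] at hj
  obtain ⟨i, hi, rfl⟩ := hj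
  have := hI hi
  rw [Finset.mem_Icc] at this
  have : n + 1 - (n + 1 - i) = i := by omega
  rw [this]
  exact hi

lemma phi_card {n : ℕ} {I : Finset ℕ} (hI : I ⊆ Finset.Icc 1 n) :
    (Phi n I).card = I.card := by
  rw [Phi]
  apply Finset.card_image_of_injOn
  intro a ha b hb hab
  have ha' := hI ha; have hb' := hI hb
  rw [Finset.mem_Icc] at ha' hb'
  have hab' : n + 1 - a = n + 1 - b := hab
  omega


/-- if `I₀ ⊆ [n]` satisfies that every `i ∈ I₀ \ Φ(I₀)` has
`2i ≥ n+1` and `J₀ = Φ(I₀)` (so `|I₀| = |J₀| = r`), then writing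
`I₀ = {i_1 > … > i_r}` and `J₀ = {j_1 > … > j_r}` we have `j_s ≤ i_s` for all
`1 ≤ s ≤ r`; consequently every nonempty initial segment `K` of `J₀` satisfies
`K ≤ I₀`. -/
theorem stmt10 (n : ℕ) (hn : 1 ≤ n) (I₀ : Finset ℕ) (hI : I₀ ⊆ Finset.Icc 1 n)
    (hcond : ∀ i ∈ I₀, i ∉ Phi n I₀ → n + 1 ≤ 2 * i) :
    (Phi n I₀).card = I₀.card ∧
    (∀ s < I₀.card,
      (descList (Phi n I₀)).getD s 0 ≤ (descList I₀).getD s 0) ∧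
    (∀ K : Finset ℕ, IsInitSeg K (Phi n I₀) → SetLE K I₀) := by
  set J := Phi n I₀ with hJ
  have hcard : J.card = I₀.card := phi_card hI
  have hJsub : J ⊆ Finset.Icc 1 n := phi_subset hI
  have main : ∀ s < I₀.card,
      (descList J).getD s 0 ≤ (descList I₀).getD s 0 := by
    intro s hs
    have hsJ : s < J.card := by omega
    by_contra hcon
    push_neg at hcon
    set js := (descList J).getD s 0 with hjs
    set is' := (descList I₀).getD s 0 with his
    have hjsJ : js ∈ J := descList_mem' J hsJ
    have hjsIcc := hJsub hjsJ
    rw [Finset.mem_Icc] at hjsIcc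
    set B := I₀.filter (fun x => js ≤ x) with hB
    set A := I₀.filter (fun x => x ≤ n + 1 - js) with hA
    have hBcard : B.card ≤ s := by
      by_contra hb
      push_neg at hb
      exact absurd (descList_ge I₀ hs hb) (by omega)
    have hAcard : s + 1 ≤ A.card := by
      rw [← descList_key J hsJ]
      apply Finset.card_le_card_of_injOn (fun j => n + 1 - j)
      · intro j hj
        rw [Finset.mem_coe, Finset.mem_filter] at hj
        rw [Finset.mem_coe, hA, Finset.mem_filter]
        beta_reduce
        refine ⟨phi_inv hI hj.1, by omega⟩
      · intro a ha b hb hab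
        rw [Finset.mem_coe, Finset.mem_filter] at ha hb
        have ha' := hJsub ha.1; have hb' := hJsub hb.1
        rw [Finset.mem_Icc] at ha' hb'
        simp only at hab
        omega
    have hinj : (A \ B).card ≤ (B \ A).card := by
      apply Finset.card_le_card_of_injOn (fun i => n + 1 - i)
      · intro i hi
        rw [Finset.mem_coe, Finset.mem_sdiff, hA, hB, Finset.mem_filter, Finset.mem_filter] at hi
        obtain ⟨⟨hiI, hile⟩, hnB⟩ := hi
        have hilt : i < js := by
          by_contra h
          exact hnB ⟨hiI, by omega⟩
        have hiIcc := hI hiI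
        rw [Finset.mem_Icc] at hiIcc
        have h2i : ¬ (n + 1 ≤ 2 * i) := by omega
        have hiJ : i ∈ J := by
          by_contra h
          exact h2i (hcond i hiI h)
        have hni : n + 1 - i ∈ I₀ := phi_inv hI hiJ
        rw [Finset.mem_coe, Finset.mem_sdiff, hA, hB, Finset.mem_filter, Finset.mem_filter]
        beta_reduce
        constructor
        · exact ⟨hni, by omega⟩
        · rw [not_and]
          intro _
          omega
      · intro a ha b hb hab
        rw [Finset.mem_coe, Finset.mem_sdiff, hA, Finset.mem_filter] at ha hb
        have ha' := hI ha.1.1; have hb' := hI hb.1.1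
        rw [Finset.mem_Icc] at ha' hb'
        simp only at hab
        omega
    have e1 : (A ∩ B).card + (A \ B).card = A.card := Finset.card_inter_add_card_sdiff A B
    have e2 : (B ∩ A).card + (B \ A).card = B.card := Finset.card_inter_add_card_sdiff B A
    have e3 : (A ∩ B).card = (B ∩ A).card := by rw [Finset.inter_comm]
    omega
  refine ⟨hcard, main, ?_⟩
  intro K hK
  obtain ⟨hKne, hKsub, _⟩ := hK
  have hKcard : K.card ≤ I₀.card := by
    have := Finset.card_le_card hKsub
    omega
  refine ⟨hKcard, ?_⟩
  intro l hl
  calc (descList K).getD l 0 ≤ (descList J).getD l 0 := descList_mono hKsub hl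
    _ ≤ (descList I₀).getD l 0 := main l (by omega)
end

section
/- In the algorithm associated to a symmetric dimension vector d of positive integers: (i) every vector d^k has nonnegative entries and is symmetric (d^k_i = d^k_{n+1−i} for all i); (ii) for every k ≥ 1 each entry of e^k lies in {0,1,2}; (iii) d^k = 0 for all k ≥ max_i d_i; and (iv) if m is such that d^m = 0, then d = e^0 + e^1 + … + e^m (coordinatewise sum). -/
/-- One step of the `f`-vector of the algorithm. -/
def fstep (n : ℕ) (v : ℕ → ℤ) : ℕ → ℤ := fun i =>
  if 2 ≤ v i ∨ (v i = 1 ∧ 2 * i < n + 1) then 1 else 0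

/-- One step of the `g`-vector of the algorithm. -/
def gstep (n : ℕ) (v : ℕ → ℤ) : ℕ → ℤ := fun i =>
  if 2 ≤ v i ∨ (v i = 1 ∧ n + 1 < 2 * i) then 1 else 0

/-- `e = f + g`. -/
def estep (n : ℕ) (v : ℕ → ℤ) : ℕ → ℤ := fun i => fstep n v i + gstep n v i

/-- `e⁰ = (1,…,1)` if `N = Σ dᵢ` is odd, `(0,…,0)` if `N` is even. -/
def evec0 (n : ℕ) (d : ℕ → ℤ) : ℕ → ℤ :=
  fun _ => if Odd (∑ i ∈ Finset.Icc 1 n, d i) then 1 else 0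

/-- The vectors `d^k` of the algorithm. -/
def dvec (n : ℕ) (d : ℕ → ℤ) : ℕ → ℕ → ℤ
  | 0 => fun i => d i - evec0 n d i
  | k + 1 => fun i => dvec n d k i - estep n (dvec n d k) i

/-- The vectors `e^k` of the algorithm (`e^{k+1} = f^{k+1} + g^{k+1}`). -/
def evec (n : ℕ) (d : ℕ → ℤ) : ℕ → ℕ → ℤ
  | 0 => evec0 n d
  | k + 1 => estep n (dvec n d k)

/-- The support `I₀^k` of `f^k` (for `k ≥ 1`). -/
def Iset (n : ℕ) (d : ℕ → ℤ) (k : ℕ) : Finset ℕ :=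
  (Finset.Icc 1 n).filter (fun i => fstep n (dvec n d (k - 1)) i ≠ 0)

/-- The support `J₀^k` of `g^k` (for `k ≥ 1`). -/
def Jset (n : ℕ) (d : ℕ → ℤ) (k : ℕ) : Finset ℕ :=
  (Finset.Icc 1 n).filter (fun i => gstep n (dvec n d (k - 1)) i ≠ 0)


section Aux

lemma estep_nonneg (n : ℕ) (v : ℕ → ℤ) (i : ℕ) : 0 ≤ estep n v i := by
  simp only [estep, fstep, gstep]; split_ifs <;> omega

lemma estep_facts (n : ℕ) (v : ℕ → ℤ) (i : ℕ) (h0 : 0 ≤ v i)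
    (hpar : ¬ 2 * i = n + 1 ∨ v i % 2 = 0) :
    0 ≤ v i - estep n v i ∧ (1 ≤ v i → v i - estep n v i ≤ v i - 1) ∧
      (v i % 2 = 0 → (v i - estep n v i) % 2 = 0) := by
  simp only [estep, fstep, gstep]
  split_ifs with h1 h2 h2 <;> omega

lemma estep_symm (n : ℕ) (v : ℕ → ℤ) (i : ℕ) (h1 : 1 ≤ i) (h2 : i ≤ n)
    (hv : v (n + 1 - i) = v i) : estep n v (n + 1 - i) = estep n v i := by
  have e1 : (2 * (n + 1 - i) < n + 1) ↔ (n + 1 < 2 * i) := by omega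
  have e2 : (n + 1 < 2 * (n + 1 - i)) ↔ (2 * i < n + 1) := by omega
  simp only [estep, fstep, gstep, hv, e1, e2]
  exact add_comm _ _

lemma center_parity (n : ℕ) (d : ℕ → ℤ)
    (hsym : ∀ i ∈ Finset.Icc 1 n, d i = d (n + 1 - i))
    (i : ℕ) (hi : i ∈ Finset.Icc 1 n) (hc : 2 * i = n + 1) :
    (Even (∑ j ∈ Finset.Icc 1 n, d j) ↔ Even (d i)) := by
  simp only [Finset.mem_Icc] at hi
  have key : ((∑ j ∈ Finset.Icc 1 n, d j : ℤ) : ZMod 2) = ((d i : ℤ) : ZMod 2) := by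
    rw [← Finset.add_sum_erase _ d (by simp [Finset.mem_Icc]; omega : i ∈ Finset.Icc 1 n)]
    push_cast
    rw [add_eq_left]
    refine Finset.sum_involution (fun j _ => n + 1 - j) ?_ ?_ ?_ ?_
    · intro a ha
      simp only [Finset.mem_erase, Finset.mem_Icc] at ha
      rw [← hsym a (by simp [Finset.mem_Icc]; omega)]
      exact CharTwo.add_self_eq_zero _
    · intro a ha _
      simp only [Finset.mem_erase, Finset.mem_Icc] at ha
      show n + 1 - a ≠ a
      omega
    · intro a ha
      simp only [Finset.mem_erase, Finset.mem_Icc] at ha ⊢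
      omega
    · intro a ha
      simp only [Finset.mem_erase, Finset.mem_Icc] at ha
      show n + 1 - (n + 1 - a) = a
      omega
  have cast0 : ∀ m : ℤ, Even m ↔ ((m : ZMod 2) = 0) := by
    intro m
    rw [ZMod.intCast_zmod_eq_zero_iff_dvd]
    constructor
    · rintro ⟨c, rfl⟩; exact ⟨c, by ring⟩
    · rintro ⟨c, rfl⟩; exact ⟨c, by push_cast; ring⟩
  rw [cast0, cast0, key]

lemma inv_lemma (n : ℕ) (hn : 1 ≤ n) (d : ℕ → ℤ)
    (hd : ∀ i ∈ Finset.Icc 1 n, 0 < d i)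
    (hsym : ∀ i ∈ Finset.Icc 1 n, d i = d (n + 1 - i)) :
    ∀ k, ∀ i ∈ Finset.Icc 1 n,
      0 ≤ dvec n d k i ∧ dvec n d k i = dvec n d k (n + 1 - i) ∧
      (2 * i = n + 1 → dvec n d k i % 2 = 0) ∧
      (dvec n d k i ≤ d i - k ∨ dvec n d k i = 0) := by
  intro k
  induction k with
  | zero =>
    intro i hi
    have hii := hi
    simp only [Finset.mem_Icc] at hii
    have hdi := hd i hi
    have hs := hsym i hi
    have he0 : evec0 n d i = 0 ∨ evec0 n d i = 1 := by
      unfold evec0; split_ifs <;> simp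
    refine ⟨?_, ?_, ?_, ?_⟩
    · show 0 ≤ d i - evec0 n d i; omega
    · show d i - evec0 n d i = d (n + 1 - i) - evec0 n d (n + 1 - i)
      rw [← hs]; rfl
    · intro hc
      show (d i - evec0 n d i) % 2 = 0
      have hcp := center_parity n d hsym i hi hc
      rw [Int.even_iff, Int.even_iff] at hcp
      unfold evec0
      by_cases h : Odd (∑ j ∈ Finset.Icc 1 n, d j)
      · rw [if_pos h]
        rw [Int.odd_iff] at h
        omega
      · rw [if_neg h]
        rw [Int.not_odd_iff_even, Int.even_iff] at h
        omega
    · left; show d i - evec0 n d i ≤ d i - (0 : ℕ); push_cast; omega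
  | succ k ih =>
    intro i hi
    have hii := hi
    simp only [Finset.mem_Icc] at hii
    have hj : n + 1 - i ∈ Finset.Icc 1 n := by simp [Finset.mem_Icc]; omega
    obtain ⟨h0, hsm, hpar, hdec⟩ := ih i hi
    obtain ⟨h0', hsm', hpar', hdec'⟩ := ih (n + 1 - i) hj
    have hF := estep_facts n (dvec n d k) i h0 (by tauto)
    have hnn := estep_nonneg n (dvec n d k) i
    refine ⟨?_, ?_, ?_, ?_⟩
    · show 0 ≤ dvec n d k i - estep n (dvec n d k) i
      exact hF.1
    · show dvec n d k i - estep n (dvec n d k) i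
        = dvec n d k (n + 1 - i) - estep n (dvec n d k) (n + 1 - i)
      rw [← hsm, estep_symm n (dvec n d k) i hii.1 hii.2 hsm.symm]
    · intro hc
      show (dvec n d k i - estep n (dvec n d k) i) % 2 = 0
      exact hF.2.2 (hpar hc)
    · show dvec n d k i - estep n (dvec n d k) i ≤ d i - ((k : ℤ) + 1) ∨
        dvec n d k i - estep n (dvec n d k) i = 0
      rcases hdec with h | h
      · by_cases h1 : 1 ≤ dvec n d k i
        · left; have := hF.2.1 h1; omega
        · right; have hz : dvec n d k i = 0 := by omega
          have := hF.1; omega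
      · right; have := hF.1; omega

lemma telescope (n : ℕ) (d : ℕ → ℤ) :
    ∀ k i, dvec n d k i = d i - ∑ j ∈ Finset.range (k + 1), evec n d j i := by
  intro k
  induction k with
  | zero => intro i; simp [dvec, evec]
  | succ k ih =>
    intro i
    rw [Finset.sum_range_succ]
    show dvec n d k i - estep n (dvec n d k) i = _
    rw [ih i]
    show _ = d i - (_ + estep n (dvec n d k) i)
    ring

end Aux

/-- for the algorithm associated to a symmetric dimension vector `d`
of positive integers: (i) every `d^k` has nonnegative, symmetric entries;
(ii) for `k ≥ 1` each entry of `e^k` lies in `{0,1,2}`; (iii) `d^k = 0` for all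
`k ≥ max_i d_i`; (iv) if `d^m = 0` then `d = e^0 + e^1 + … + e^m` coordinatewise. -/
theorem stmt11 (n : ℕ) (hn : 1 ≤ n) (d : ℕ → ℤ)
    (hd : ∀ i ∈ Finset.Icc 1 n, 0 < d i)
    (hsym : ∀ i ∈ Finset.Icc 1 n, d i = d (n + 1 - i)) :
    (∀ k, ∀ i ∈ Finset.Icc 1 n,
      0 ≤ dvec n d k i ∧ dvec n d k i = dvec n d k (n + 1 - i)) ∧
    (∀ k, 1 ≤ k → ∀ i ∈ Finset.Icc 1 n,
      evec n d k i ∈ ({0, 1, 2} : Set ℤ)) ∧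
    (∀ k : ℕ, (∀ i ∈ Finset.Icc 1 n, d i ≤ (k : ℤ)) →
      ∀ i ∈ Finset.Icc 1 n, dvec n d k i = 0) ∧
    (∀ m : ℕ, (∀ i ∈ Finset.Icc 1 n, dvec n d m i = 0) →
      ∀ i ∈ Finset.Icc 1 n, d i = ∑ j ∈ Finset.range (m + 1), evec n d j i) := by
  have INV := inv_lemma n hn d hd hsym
  refine ⟨?_, ?_, ?_, ?_⟩
  · intro k i hi
    obtain ⟨a, b, _, _⟩ := INV k i hi
    exact ⟨a, b⟩
  · intro k hk i hi
    cases k with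
    | zero => omega
    | succ m =>
      show estep n (dvec n d m) i ∈ ({0, 1, 2} : Set ℤ)
      simp only [estep, fstep, gstep, Set.mem_insert_iff, Set.mem_singleton_iff]
      split_ifs <;> norm_num
  · intro k hk i hi
    obtain ⟨h0, _, _, hdec⟩ := INV k i hi
    have := hk i hi
    omega
  · intro m hm i hi
    have := telescope n d m i
    rw [hm i hi] at this
    omega
end

section
/- In the algorithm associated to a symmetric dimension vector d of positive integers, the supports satisfy I_0^{k+1} ⊆ I_0^k and J_0^{k+1} ⊆ J_0^k for all k ≥ 1, and the support {i : d^0_i ≠ 0} of d^0 is equal to I_0^1 ∪ J_0^1. -/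
lemma fstep_mono (n : ℕ) (v : ℕ → ℤ) (i : ℕ)
    (h : fstep n (fun j => v j - estep n v j) i ≠ 0) : fstep n v i ≠ 0 := by
  simp only [estep, fstep, gstep] at h ⊢
  split_ifs at h ⊢ with h1 h2 h3 <;> omega

lemma gstep_mono (n : ℕ) (v : ℕ → ℤ) (i : ℕ)
    (h : gstep n (fun j => v j - estep n v j) i ≠ 0) : gstep n v i ≠ 0 := by
  simp only [estep, fstep, gstep] at h ⊢
  split_ifs at h ⊢ with h1 h2 h3 <;> omega

lemma mid_even (n : ℕ) (d : ℕ → ℤ)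
    (hsym : ∀ j ∈ Finset.Icc 1 n, d j = d (n + 1 - j))
    (i : ℕ) (hi : i ∈ Finset.Icc 1 n) (h2 : 2 * i = n + 1) :
    Even (d i - evec0 n d i) := by
  have hi' := Finset.mem_Icc.mp hi
  have key : ((∑ j ∈ Finset.Icc 1 n, d j : ℤ) : ZMod 2) = ((d i : ℤ) : ZMod 2) := by
    push_cast
    rw [← Finset.sum_erase_add _ _ hi]
    have h0 : ∑ j ∈ (Finset.Icc 1 n).erase i, ((d j : ZMod 2)) = 0 := by
      apply Finset.sum_involution (fun a _ => n + 1 - a)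
      · intro a ha
        have ha' := Finset.mem_of_mem_erase ha
        rw [← hsym a ha']
        exact CharTwo.add_self_eq_zero _
      · intro a ha _
        have ha' := Finset.mem_erase.mp ha
        have ha'' := Finset.mem_Icc.mp ha'.2
        omega
      · intro a ha
        have ha' := Finset.mem_erase.mp ha
        have ha'' := Finset.mem_Icc.mp ha'.2
        rw [Finset.mem_erase, Finset.mem_Icc]
        omega
      · intro a ha
        have ha' := Finset.mem_erase.mp ha
        have ha'' := Finset.mem_Icc.mp ha'.2
        omega
    rw [h0, zero_add]
  have hdi : Even (d i) ↔ Even (∑ j ∈ Finset.Icc 1 n, d j) := by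
    rw [even_iff_two_dvd, even_iff_two_dvd, show (2:ℤ) = ((2:ℕ):ℤ) by norm_num,
        ← ZMod.intCast_zmod_eq_zero_iff_dvd, ← ZMod.intCast_zmod_eq_zero_iff_dvd, key]
  rw [Int.even_sub]
  simp only [evec0]
  split_ifs with h
  · simp only [hdi, ← Int.not_odd_iff_even, h, not_true]
    simp [Int.not_even_iff_odd.mpr (by decide : Odd (1:ℤ))]
  · simp only [hdi, ← Int.not_odd_iff_even, h, not_false_iff]
    simp

/-- for the algorithm associated to a symmetric dimension vector `d`
of positive integers, the supports satisfy `I₀^{k+1} ⊆ I₀^k` and `J₀^{k+1} ⊆ J₀^k`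
for all `k ≥ 1`, and the support of `d^0` equals `I₀^1 ∪ J₀^1`. -/
theorem stmt12 (n : ℕ) (hn : 1 ≤ n) (d : ℕ → ℤ)
    (hd : ∀ i ∈ Finset.Icc 1 n, 0 < d i)
    (hsym : ∀ i ∈ Finset.Icc 1 n, d i = d (n + 1 - i)) :
    (∀ k, 1 ≤ k → Iset n d (k + 1) ⊆ Iset n d k ∧ Jset n d (k + 1) ⊆ Jset n d k) ∧
    (Finset.Icc 1 n).filter (fun i => dvec n d 0 i ≠ 0) = Iset n d 1 ∪ Jset n d 1 := by
  constructor
  · intro k hk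
    have hk1 : k - 1 + 1 = k := Nat.succ_pred_eq_of_pos hk
    have hdef : dvec n d (k - 1 + 1)
        = fun j => dvec n d (k - 1) j - estep n (dvec n d (k - 1)) j := rfl
    constructor
    · intro i hi
      simp only [Iset, Finset.mem_filter, Nat.add_sub_cancel] at hi ⊢
      refine ⟨hi.1, ?_⟩
      have h2 := hi.2
      rw [← hk1, hdef] at h2
      exact fstep_mono n (dvec n d (k - 1)) i h2
    · intro i hi
      simp only [Jset, Finset.mem_filter, Nat.add_sub_cancel] at hi ⊢
      refine ⟨hi.1, ?_⟩
      have h2 := hi.2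
      rw [← hk1, hdef] at h2
      exact gstep_mono n (dvec n d (k - 1)) i h2
  · ext i
    simp only [Finset.mem_filter, Finset.mem_union, Iset, Jset, Nat.sub_self]
    constructor
    · rintro ⟨hmem, hne⟩
      have hpos : 0 < d i := hd i hmem
      have hdef : dvec n d 0 i = d i - evec0 n d i := rfl
      have h0 : 0 ≤ dvec n d 0 i := by
        rw [hdef]; simp only [evec0]; split_ifs <;> omega
      by_cases hmid : 2 * i = n + 1
      · obtain ⟨r, hr⟩ := mid_even n d hsym i hmem hmid
        have h2 : 2 ≤ dvec n d 0 i := by omega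
        left
        refine ⟨hmem, ?_⟩
        simp only [fstep, if_pos (Or.inl h2)]
        exact one_ne_zero
      · have h1 : 1 ≤ dvec n d 0 i := by omega
        rcases lt_or_gt_of_ne hmid with hlt | hgt
        · left
          refine ⟨hmem, ?_⟩
          simp only [fstep]
          rw [if_pos (by omega)]
          exact one_ne_zero
        · right
          refine ⟨hmem, ?_⟩
          simp only [gstep]
          rw [if_pos (by omega)]
          exact one_ne_zero
    · rintro (⟨hmem, hne⟩ | ⟨hmem, hne⟩) <;> refine ⟨hmem, ?_⟩
      · simp only [fstep] at hne
        split_ifs at hne with h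
        · omega
        · exact absurd rfl hne
      · simp only [gstep] at hne
        split_ifs at hne with h
        · omega
        · exact absurd rfl hne
end

section
/- In the algorithm associated to a symmetric dimension vector d of positive integers, one has I_0^k ⊆ J_0^{k−1} and J_0^k ⊆ I_0^{k−1} for every k ≥ 2. -/
lemma key1 (n : ℕ) (v : ℕ → ℤ) (i : ℕ)
    (h : fstep n (fun j => v j - estep n v j) i ≠ 0) : gstep n v i ≠ 0 := by
  simp only [fstep, gstep, estep] at h ⊢
  split_ifs at h ⊢ <;> omega

lemma key2 (n : ℕ) (v : ℕ → ℤ) (i : ℕ)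
    (h : gstep n (fun j => v j - estep n v j) i ≠ 0) : fstep n v i ≠ 0 := by
  simp only [fstep, gstep, estep] at h ⊢
  split_ifs at h ⊢ <;> omega

/-- for the algorithm associated to a symmetric dimension vector `d`
of positive integers, `I₀^k ⊆ J₀^{k-1}` and `J₀^k ⊆ I₀^{k-1}` for every `k ≥ 2`. -/
theorem stmt13 (n : ℕ) (hn : 1 ≤ n) (d : ℕ → ℤ)
    (hd : ∀ i ∈ Finset.Icc 1 n, 0 < d i)
    (hsym : ∀ i ∈ Finset.Icc 1 n, d i = d (n + 1 - i)) :
    ∀ k, 2 ≤ k → Iset n d k ⊆ Jset n d (k - 1) ∧ Jset n d k ⊆ Iset n d (k - 1) := by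
  intro k hk
  obtain ⟨m, rfl⟩ : ∃ m, k = m + 2 := ⟨k - 2, by omega⟩
  constructor
  · intro i hi
    simp only [Iset, Jset, Finset.mem_filter] at hi ⊢
    exact ⟨hi.1, key1 n (dvec n d m) i hi.2⟩
  · intro i hi
    simp only [Iset, Jset, Finset.mem_filter] at hi ⊢
    exact ⟨hi.1, key2 n (dvec n d m) i hi.2⟩
end
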